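/- arXiv:1803.10180 — 9 statements merged into one kernel-verified Lean document; each statement's English description precedes it below -/
import Mathlib

section
/- Let q be a prime power, t ≥ 1, and let 𝒫 be a vector space t-partition of 𝔽_q^v of type v^{m_v} ⋯ t^{m_t}. Then for all t ≤ i < j ≤ v: m_i ≤ 1 whenever 2i > v + t − 1, and m_i · m_j = 0 whenever i + j > v + t − 1 (dimension condition). -/
open Module

/-- A vector space `t`-partition of `F^v`: a set of subspaces, each of dimension at
least `t`, such that every `t`-dimensional subspace is contained in exactly one element. -/
def IsVSPartition {F : Type} [Field F] {v : ℕ} (t : ℕ)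
    (P : Set (Submodule F (Fin v → F))) : Prop :=
  (∀ U ∈ P, t ≤ finrank F U) ∧
  ∀ T : Submodule F (Fin v → F), finrank F T = t → ∃! U, U ∈ P ∧ T ≤ U

/-- Any submodule of finrank at least `t` contains a submodule of finrank `t`. -/
lemma exists_sub_finrank_eq {F : Type} [Field F] {v t : ℕ} (U : Submodule F (Fin v → F))
    (h : t ≤ finrank F U) :
    ∃ T : Submodule F (Fin v → F), finrank F T = t ∧ T ≤ U := by
  obtain ⟨f, hf⟩ := exists_linearIndependent_of_le_finrank (R := F) (M := U) h
  have hf' : LinearIndependent F (fun k : Fin t => (f k : Fin v → F)) :=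
    hf.map' U.subtype U.ker_subtype
  refine ⟨Submodule.span F (Set.range fun k : Fin t => (f k : Fin v → F)), ?_, ?_⟩
  · rw [finrank_span_eq_card hf', Fintype.card_fin]
  · rw [Submodule.span_le]
    rintro x ⟨k, rfl⟩
    exact (f k).2

/-- Two distinct members of a t-partition intersect in dimension < t. -/
lemma inf_finrank_lt {F : Type} [Field F] {v t : ℕ} {P : Set (Submodule F (Fin v → F))}
    (hP : IsVSPartition t P) {U W : Submodule F (Fin v → F)}
    (hU : U ∈ P) (hW : W ∈ P) (hne : U ≠ W) : finrank F ↥(U ⊓ W) < t := by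
  by_contra h
  push_neg at h
  obtain ⟨T, hT, hTle⟩ := exists_sub_finrank_eq (U ⊓ W) h
  obtain ⟨X, _, hXuniq⟩ := hP.2 T hT
  exact hne ((hXuniq U ⟨hU, hTle.trans inf_le_left⟩).trans
    (hXuniq W ⟨hW, hTle.trans inf_le_right⟩).symm)

lemma key_ineq {F : Type} [Field F] [Fintype F] {v t : ℕ} (ht : 1 ≤ t)
    {P : Set (Submodule F (Fin v → F))} (hP : IsVSPartition t P)
    {U W : Submodule F (Fin v → F)} (hU : U ∈ P) (hW : W ∈ P) (hne : U ≠ W) :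
    finrank F U + finrank F W ≤ v + t - 1 := by
  have h1 : finrank F ↥(U ⊓ W) < t := inf_finrank_lt hP hU hW hne
  have h2 : finrank F ↥(U ⊔ W) ≤ v := by
    have := Submodule.finrank_le (U ⊔ W)
    simpa [Module.finrank_fin_fun] using this
  have h3 := Submodule.finrank_sup_add_finrank_inf_eq U W
  omega

/-- Dimension condition: for all `t ≤ i < j ≤ v` we have `m_i ≤ 1` whenever
`2i > v + t − 1` and `m_i · m_j = 0` whenever `i + j > v + t − 1`. -/
theorem dimension_condition (q v t : ℕ) (ht : 1 ≤ t)
    (F : Type) [Field F] [Fintype F] (hq : Fintype.card F = q)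
    (P : Set (Submodule F (Fin v → F))) (hP : IsVSPartition t P) :
    ∀ i j : ℕ, t ≤ i → i < j → j ≤ v →
      (2 * i > v + t - 1 → {U ∈ P | finrank F U = i}.ncard ≤ 1) ∧
      (i + j > v + t - 1 →
        {U ∈ P | finrank F U = i}.ncard * {U ∈ P | finrank F U = j}.ncard = 0) := by
  intro i j hti hij hjv
  constructor
  · intro hgt
    have hsub : {U ∈ P | finrank F U = i}.Subsingleton := by
      rintro U ⟨hU, hUi⟩ W ⟨hW, hWi⟩
      by_contra hne
      have := key_ineq ht hP hU hW hne
      omega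
    rcases hsub.eq_empty_or_singleton with h | ⟨x, h⟩ <;> simp [h]
  · intro hgt
    rw [Nat.mul_eq_zero]
    by_contra hc
    push_neg at hc
    obtain ⟨h1, h2⟩ := hc
    obtain ⟨U, hU, hUi⟩ := Set.nonempty_of_ncard_ne_zero h1
    obtain ⟨W, hW, hWj⟩ := Set.nonempty_of_ncard_ne_zero h2
    have hne : U ≠ W := fun h => by rw [h] at hUi; omega
    have := key_ineq ht hP hU hW hne
    omega
end

section
/- Let q be a prime power and t ≥ 1. Every non-trivial vector space t-partition 𝒫 of 𝔽_q^{t+2} has type (t+1)^1 t^{[t+2 choose t]_q − [t+1 choose t]_q}; more precisely, 𝒫 consists of exactly one (t+1)-dimensional subspace U together with all t-dimensional subspaces of 𝔽_q^{t+2} not contained in U. -/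
open Module

/-- The Gaussian binomial coefficient `[n choose k]_q`, defined via the standard
Pascal-type recurrence `[n+1, k+1]_q = q^(k+1) * [n, k+1]_q + [n, k]_q`. -/
def gaussBinom (q : ℕ) : ℕ → ℕ → ℕ
  | _, 0 => 1
  | 0, _ + 1 => 0
  | n + 1, k + 1 => q ^ (k + 1) * gaussBinom q n (k + 1) + gaussBinom q n k

lemma gb_zero (q n : ℕ) : gaussBinom q n 0 = 1 := by cases n <;> rfl
lemma gb_succ (q n k : ℕ) : gaussBinom q (n+1) (k+1) =
    q ^ (k + 1) * gaussBinom q n (k + 1) + gaussBinom q n k := rfl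

variable {F : Type} [Field F]

lemma aux_finrank_map_add {V W : Type} [AddCommGroup V] [Module F V] [FiniteDimensional F V]
    [AddCommGroup W] [Module F W] (f : V →ₗ[F] W) (p : Submodule F V) :
    finrank F (p.map f) + finrank F (p ⊓ LinearMap.ker f : Submodule F V) = finrank F p := by
  have h := LinearMap.finrank_range_add_finrank_ker (f.domRestrict p)
  rw [LinearMap.range_domRestrict, LinearMap.ker_domRestrict] at h
  rwa [← Submodule.finrank_map_subtype_eq p (Submodule.comap p.subtype (LinearMap.ker f)),
    Submodule.map_comap_subtype] at h

lemma aux_exists_finrank {V : Type} [AddCommGroup V] [Module F V] [FiniteDimensional F V]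
    (k : ℕ) (hk : k ≤ finrank F V) : ∃ T : Submodule F V, finrank F T = k := by
  induction k with
  | zero => exact ⟨⊥, finrank_bot F V⟩
  | succ k ih =>
    obtain ⟨T, hT⟩ := ih (Nat.le_of_succ_le hk)
    have hlt : finrank F T < finrank F V := hT ▸ Nat.lt_of_succ_le hk
    obtain ⟨m, hm⟩ := T.exists_of_finrank_lt hlt
    have hm0 : m ∉ T := by simpa using hm 1 one_ne_zero
    refine ⟨T ⊔ F ∙ m, ?_⟩
    have hd : T ⊓ (F ∙ m) = ⊥ := by
      rw [eq_bot_iff]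
      rintro x ⟨hxT, hxm⟩
      obtain ⟨r, rfl⟩ := Submodule.mem_span_singleton.mp hxm
      rcases eq_or_ne r 0 with rfl | hr
      · simp
      · exact absurd hxT (hm r hr)
    have hmne : m ≠ 0 := by rintro rfl; exact hm0 T.zero_mem
    have := Submodule.finrank_sup_add_finrank_inf_eq T (F ∙ m)
    rw [hd, finrank_bot, add_zero, hT, finrank_span_singleton hmne] at this
    exact this


lemma aux_inf_line {V : Type} [AddCommGroup V] [Module F V] [FiniteDimensional F V]
    {L : Submodule F V} (hL1 : finrank F L = 1) (W : Submodule F V) (hW : ¬ L ≤ W) :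
    W ⊓ L = ⊥ := by
  by_contra hne
  have h1 : 1 ≤ finrank F (W ⊓ L : Submodule F V) := by
    have := mt Submodule.finrank_eq_zero.mp hne
    omega
  have : W ⊓ L = L := Submodule.eq_of_le_of_finrank_le inf_le_right (by omega)
  exact hW (this ▸ inf_le_left)

lemma aux_card_isCompl [Fintype F] {E : Type} [AddCommGroup E] [Module F E]
    [FiniteDimensional F E] (p : Submodule F E) :
    Nat.card {q' : Submodule F E // IsCompl p q'} =
      Fintype.card F ^ (finrank F (E ⧸ p) * finrank F p) := by
  classical
  obtain ⟨q0, hq0⟩ := p.exists_isCompl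
  set f0 : E →ₗ[F] p := p.linearProjOfIsCompl q0 hq0 with hf0
  have hf0l : ∀ x : p, f0 (x : E) = x := fun x => Submodule.linearProjOfIsCompl_apply_left hq0 x
  have e2 : {f : E →ₗ[F] p // ∀ x : p, f (x : E) = x} ≃ {g : E →ₗ[F] p // ∀ x : p, g (x : E) = 0} :=
    { toFun := fun f => ⟨f.1 - f0, fun x => by simp [f.2 x, hf0l x]⟩
      invFun := fun g => ⟨g.1 + f0, fun x => by simp [g.2 x, hf0l x]⟩
      left_inv := fun f => by ext x; simp
      right_inv := fun g => by ext x; simp }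
  have e3 : {g : E →ₗ[F] p // ∀ x : p, g (x : E) = 0} ≃ ((E ⧸ p) →ₗ[F] p) :=
    { toFun := fun g => p.liftQ g.1 (fun x hx => by simpa using g.2 ⟨x, hx⟩)
      invFun := fun h => ⟨h ∘ₗ p.mkQ, fun x => by
        have : (Submodule.Quotient.mk (x : E) : E ⧸ p) = 0 :=
          (Submodule.Quotient.mk_eq_zero p).mpr x.2
        simp [this]⟩
      left_inv := fun g => by
        apply Subtype.ext
        apply Submodule.liftQ_mkQ
      right_inv := fun h => by
        ext x
        simp }
  rw [Nat.card_congr ((p.isComplEquivProj.trans e2).trans e3)]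
  have : Finite ((E ⧸ p) →ₗ[F] p) := by
    have : Finite E := Module.finite_of_finite F
    have : Finite (E ⧸ p) := Quotient.finite _
    exact Finite.of_injective (fun f : (E ⧸ p) →ₗ[F] p => (f : (E ⧸ p) → p))
      DFunLike.coe_injective
  have := Fintype.ofFinite ((E ⧸ p) →ₗ[F] p)
  rw [Nat.card_eq_fintype_card, card_eq_pow_finrank (K := F), Module.finrank_linearMap]

lemma aux_fiber_card [Fintype F] {V : Type} [AddCommGroup V] [Module F V] [FiniteDimensional F V]
    (L : Submodule F V) (hL1 : finrank F L = 1) (k : ℕ)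
    (Wb : Submodule F (V ⧸ L)) (hWb : finrank F Wb = k + 1) :
    Nat.card {W : Submodule F V //
        (finrank F W = k + 1 ∧ ¬ L ≤ W) ∧ W.map L.mkQ = Wb} =
      Fintype.card F ^ (k + 1) := by
  classical
  have hkerL : LinearMap.ker L.mkQ = L := L.ker_mkQ
  set X : Submodule F V := Wb.comap L.mkQ with hXdef
  have hLX : L ≤ X := by
    intro x hx
    have : L.mkQ x = 0 := by rwa [← LinearMap.mem_ker, hkerL]
    simp [hXdef, Submodule.mem_comap, this]
  have hmapX : X.map L.mkQ = Wb := by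
    rw [hXdef, Submodule.map_comap_eq, L.range_mkQ, top_inf_eq]
  have hXdim : finrank F X = k + 2 := by
    have h := aux_finrank_map_add L.mkQ X
    rw [hmapX, hkerL, inf_eq_right.mpr hLX, hL1, hWb] at h
    omega
  set pX : Submodule F X := L.comap X.subtype with hpXdef
  have hmappX : pX.map X.subtype = L := by
    rw [hpXdef, Submodule.map_comap_subtype, inf_eq_right.mpr hLX]
  have hpXdim : finrank F pX = 1 := by
    rw [← Submodule.finrank_map_subtype_eq X pX, hmappX, hL1]
  have hQpX : finrank F (X ⧸ pX) = k + 1 := by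
    have := pX.finrank_quotient_add_finrank
    rw [hpXdim, hXdim] at this
    omega
  -- forward direction
  have htof : ∀ W : Submodule F V,
      ((finrank F W = k + 1 ∧ ¬ L ≤ W) ∧ W.map L.mkQ = Wb) → IsCompl pX (W.comap X.subtype) := by
    rintro W ⟨⟨hWd, hWL⟩, hWm⟩
    have hWX : W ≤ X := by
      rw [hXdef, ← hWm]
      exact Submodule.le_comap_map _ W
    have hWLbot := aux_inf_line hL1 W hWL
    have hdisj : Disjoint pX (W.comap X.subtype) := by
      rw [disjoint_iff, eq_bot_iff]
      rintro x ⟨hx1, hx2⟩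
      have hmem : (x : V) ∈ W ⊓ L := ⟨hx2, hx1⟩
      rw [hWLbot] at hmem
      exact Subtype.ext (by simpa using hmem)
    have hWcdim : finrank F (W.comap X.subtype) = k + 1 := by
      rw [← Submodule.finrank_map_subtype_eq X, Submodule.map_comap_subtype,
        inf_eq_right.mpr hWX, hWd]
    refine ⟨hdisj, codisjoint_iff.mpr ?_⟩
    apply Submodule.eq_top_of_finrank_eq
    have h := Submodule.finrank_sup_add_finrank_inf_eq pX (W.comap X.subtype)
    rw [disjoint_iff.mp hdisj, finrank_bot, add_zero, hpXdim, hWcdim] at h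
    rw [h, hXdim]
    omega
  -- backward direction
  have hinv : ∀ q' : Submodule F X, IsCompl pX q' →
      ((finrank F (q'.map X.subtype) = k + 1 ∧ ¬ L ≤ q'.map X.subtype) ∧
        (q'.map X.subtype).map L.mkQ = Wb) := by
    intro q' hq'
    have hWd : finrank F (q'.map X.subtype) = k + 1 := by
      rw [Submodule.finrank_map_subtype_eq]
      have h := Submodule.finrank_add_eq_of_isCompl hq'
      rw [hpXdim, hXdim] at h
      omega
    have hWL : ¬ L ≤ q'.map X.subtype := by
      intro hle
      have hpq : pX ≤ q' := by
        intro x hx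
        have : (x : V) ∈ q'.map X.subtype := hle (by rw [hpXdef] at hx; exact hx)
        obtain ⟨y, hy, hyx⟩ := this
        rwa [show y = x from Subtype.ext hyx] at hy
      have hbot : pX = ⊥ := (inf_eq_left.mpr hpq).symm.trans (disjoint_iff.mp hq'.1)
      rw [hbot, finrank_bot] at hpXdim
      omega
    have hWLbot := aux_inf_line hL1 (q'.map X.subtype) hWL
    constructor
    · exact ⟨hWd, hWL⟩
    · have hle : (q'.map X.subtype).map L.mkQ ≤ Wb := by
        rw [← hmapX]
        exact Submodule.map_mono (Submodule.map_subtype_le X q')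
      have h := aux_finrank_map_add L.mkQ (q'.map X.subtype)
      rw [hkerL, hWLbot, finrank_bot, add_zero, hWd] at h
      exact (Submodule.eq_of_le_of_finrank_le hle (by omega)).symm ▸ rfl
  have efib : {W : Submodule F V //
      (finrank F W = k + 1 ∧ ¬ L ≤ W) ∧ W.map L.mkQ = Wb} ≃
      {q' : Submodule F X // IsCompl pX q'} :=
    { toFun := fun W => ⟨W.1.comap X.subtype, htof W.1 W.2⟩
      invFun := fun q' => ⟨q'.1.map X.subtype, hinv q'.1 q'.2⟩
      left_inv := fun W => Subtype.ext <| by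
        have hWX : W.1 ≤ X :=
          le_trans (Submodule.le_comap_map L.mkQ W.1) (le_of_eq (by rw [W.2.2]))
        show (W.1.comap X.subtype).map X.subtype = W.1
        rw [Submodule.map_comap_subtype, inf_eq_right.mpr hWX]
      right_inv := fun q' => Subtype.ext <| by
        show (q'.1.map X.subtype).comap X.subtype = q'.1
        rw [Submodule.comap_map_eq, Submodule.ker_subtype, sup_bot_eq] }
  rw [Nat.card_congr efib, aux_card_isCompl pX, hQpX, hpXdim, mul_one]

lemma card_grassmannian [Fintype F] :
    ∀ (n k : ℕ) (V : Type) [AddCommGroup V] [Module F V] [FiniteDimensional F V],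
      finrank F V = n →
      Nat.card {W : Submodule F V // finrank F W = k} = gaussBinom (Fintype.card F) n k := by
  intro n
  induction n with
  | zero =>
    intro k V _ _ _ hV
    cases k with
    | zero =>
      rw [gb_zero]
      have : Unique {W : Submodule F V // finrank F W = 0} :=
        ⟨⟨⟨⊥, finrank_bot F V⟩⟩, fun W => Subtype.ext (by
          have h1 : W.1 = ⊥ := Submodule.finrank_eq_zero.mp W.2
          have h2 : (⊥ : Submodule F V) = ⊥ := rfl
          simp [h1])⟩
      exact Nat.card_unique
    | succ k =>
      have : IsEmpty {W : Submodule F V // finrank F W = k + 1} := ⟨fun W => by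
        have := W.1.finrank_le
        omega⟩
      rw [Nat.card_of_isEmpty]
      rfl
  | succ n ih =>
    intro k V _ _ _ hV
    classical
    have hfinV : Finite V := Module.finite_of_finite F
    have hfinSub : Finite (Submodule F V) :=
      Finite.of_injective _ (SetLike.coe_injective (A := Submodule F V))
    cases k with
    | zero =>
      rw [gb_zero]
      have : Unique {W : Submodule F V // finrank F W = 0} :=
        ⟨⟨⟨⊥, finrank_bot F V⟩⟩, fun W => Subtype.ext (Submodule.finrank_eq_zero.mp W.2)⟩
      exact Nat.card_unique
    | succ k =>
      -- pick a nonzero vector e, L = span e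
      have : Nontrivial V := Module.nontrivial_of_finrank_pos (by omega : 0 < finrank F V)
      obtain ⟨e, he⟩ := exists_ne (0 : V)
      set L : Submodule F V := F ∙ e with hLdef
      have hL1 : finrank F L = 1 := finrank_span_singleton he
      have hkerL : LinearMap.ker L.mkQ = L := L.ker_mkQ
      have hQ : finrank F (V ⧸ L) = n := by
        have := L.finrank_quotient_add_finrank
        omega
      have esplit : ({W : Submodule F V // finrank F W = k+1 ∧ L ≤ W} ⊕
          {W : Submodule F V // finrank F W = k+1 ∧ ¬ L ≤ W}) ≃
          {W : Submodule F V // finrank F W = k+1} :=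
        ((Equiv.subtypeSubtypeEquivSubtypeInter _ _).symm.sumCongr
          (Equiv.subtypeSubtypeEquivSubtypeInter _ _).symm).trans
          (Equiv.sumCompl fun W : {W : Submodule F V // finrank F W = k+1} => L ≤ W.1)
      have eS1 : {W : Submodule F V // finrank F W = k+1 ∧ L ≤ W} ≃
          {Wb : Submodule F (V ⧸ L) // finrank F Wb = k} :=
        { toFun := fun W => ⟨W.1.map L.mkQ, by
            have h := aux_finrank_map_add L.mkQ W.1
            rw [hkerL, inf_eq_right.mpr W.2.2, hL1, W.2.1] at h
            omega⟩
          invFun := fun Wb => ⟨Wb.1.comap L.mkQ, by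
            have hle : L ≤ Wb.1.comap L.mkQ := by
              intro x hx
              have hx0 : L.mkQ x = 0 := by rwa [← LinearMap.mem_ker, hkerL]
              simp [Submodule.mem_comap, hx0]
            have hmc : (Wb.1.comap L.mkQ).map L.mkQ = Wb.1 := by
              rw [Submodule.map_comap_eq, L.range_mkQ, top_inf_eq]
            have h := aux_finrank_map_add L.mkQ (Wb.1.comap L.mkQ)
            rw [hmc, hkerL, inf_eq_right.mpr hle, hL1, Wb.2] at h
            exact ⟨by omega, hle⟩⟩
          left_inv := fun W => Subtype.ext <| by
            show (W.1.map L.mkQ).comap L.mkQ = W.1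
            rw [Submodule.comap_map_eq, hkerL, sup_eq_left.mpr W.2.2]
          right_inv := fun Wb => Subtype.ext <| by
            show (Wb.1.comap L.mkQ).map L.mkQ = Wb.1
            rw [Submodule.map_comap_eq, L.range_mkQ, top_inf_eq] }
      have hfinQ : Finite (V ⧸ L) := Quotient.finite _
      have hfinSubQ : Finite (Submodule F (V ⧸ L)) :=
        Finite.of_injective _ (SetLike.coe_injective (A := Submodule F (V ⧸ L)))
      let f : {W : Submodule F V // finrank F W = k+1 ∧ ¬ L ≤ W} →
          {Wb : Submodule F (V ⧸ L) // finrank F Wb = k + 1} := fun W =>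
        ⟨W.1.map L.mkQ, by
          have h := aux_finrank_map_add L.mkQ W.1
          rw [hkerL, aux_inf_line hL1 W.1 W.2.2, finrank_bot, add_zero, W.2.1] at h
          exact h⟩
      have hcard2 : Nat.card {W : Submodule F V // finrank F W = k+1 ∧ ¬ L ≤ W} =
          gaussBinom (Fintype.card F) n (k+1) * Fintype.card F ^ (k+1) := by
        haveI : Fintype {Wb : Submodule F (V ⧸ L) // finrank F Wb = k + 1} := Fintype.ofFinite _
        rw [← Nat.card_congr (Equiv.sigmaFiberEquiv f)]
        haveI : ∀ b : {Wb : Submodule F (V ⧸ L) // finrank F Wb = k + 1},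
            Fintype {a // f a = b} := fun b => Fintype.ofFinite _
        rw [Nat.card_eq_fintype_card, Fintype.card_sigma]
        have hfib : ∀ b : {Wb : Submodule F (V ⧸ L) // finrank F Wb = k + 1},
            Fintype.card {a // f a = b} = Fintype.card F ^ (k+1) := by
          intro b
          rw [← Nat.card_eq_fintype_card]
          have efi : {a // f a = b} ≃ {W : Submodule F V //
              (finrank F W = k + 1 ∧ ¬ L ≤ W) ∧ W.map L.mkQ = b.1} :=
            { toFun := fun a => ⟨a.1.1, a.1.2, congrArg Subtype.val a.2⟩
              invFun := fun W => ⟨⟨W.1, W.2.1⟩, Subtype.ext W.2.2⟩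
              left_inv := fun a => Subtype.ext (Subtype.ext rfl)
              right_inv := fun W => rfl }
          rw [Nat.card_congr efi, aux_fiber_card L hL1 k b.1 b.2]
        rw [Finset.sum_congr rfl (fun b _ => hfib b), Finset.sum_const, Finset.card_univ,
          smul_eq_mul]
        have hB := ih (k+1) (V ⧸ L) hQ
        rw [Nat.card_eq_fintype_card] at hB
        rw [hB]
      rw [← Nat.card_congr esplit, Nat.card_sum, Nat.card_congr eS1, ih k (V ⧸ L) hQ, hcard2,
        gb_succ]
      ring

/-- Every non-trivial vector space `t`-partition of `F_q^(t+2)` has type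
`(t+1)^1 t^([t+2,t]_q − [t+1,t]_q)`; it consists of one `(t+1)`-subspace `U` together
with all `t`-subspaces not contained in `U`. -/
theorem nontrivial_partition_dim_t_add_two (q t : ℕ) (ht : 1 ≤ t)
    (F : Type) [Field F] [Fintype F] (hq : Fintype.card F = q)
    (P : Set (Submodule F (Fin (t + 2) → F))) (hP : IsVSPartition t P)
    (hnt : ¬ ∀ U ∈ P, finrank F U = t ∨ finrank F U = t + 2) :
    ∃ U : Submodule F (Fin (t + 2) → F), finrank F U = t + 1 ∧
      P = insert U {T : Submodule F (Fin (t + 2) → F) | finrank F T = t ∧ ¬ T ≤ U} ∧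
      {W ∈ P | finrank F W = t + 1}.ncard = 1 ∧
      {W ∈ P | finrank F W = t}.ncard = gaussBinom q (t + 2) t - gaussBinom q (t + 1) t := by
  classical
  subst hq
  have hdimV : finrank F (Fin (t + 2) → F) = t + 2 := Module.finrank_fin_fun F
  have hfinV : Finite (Fin (t + 2) → F) := Module.finite_of_finite F
  have hfinSub : Finite (Submodule F (Fin (t + 2) → F)) :=
    Finite.of_injective _ (SetLike.coe_injective (A := Submodule F (Fin (t + 2) → F)))
  push_neg at hnt
  obtain ⟨U, hU, hU1, hU2⟩ := hnt
  have hUdim : finrank F U = t + 1 := by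
    have h1 := hP.1 U hU
    have h2 := U.finrank_le
    omega
  -- every other member is a t-subspace not contained in U
  have key : ∀ W ∈ P, W ≠ U → finrank F W = t ∧ ¬ W ≤ U := by
    intro W hW hne
    have h1 : t ≤ finrank F W := hP.1 W hW
    have hd : finrank F W = t := by
      by_contra hne2
      have h2 := W.finrank_le
      have h3 : t + 1 ≤ finrank F W := by omega
      have hsup := (U ⊔ W).finrank_le
      have hinfd : t ≤ finrank F (U ⊓ W : Submodule F (Fin (t + 2) → F)) := by
        have := Submodule.finrank_sup_add_finrank_inf_eq U W
        omega
      obtain ⟨T₀, hT₀⟩ := aux_exists_finrank (F := F) (V := ↥(U ⊓ W)) t hinfd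
      set T := T₀.map (U ⊓ W).subtype with hT
      have hTd : finrank F T = t := by
        rw [hT, Submodule.finrank_map_subtype_eq]; exact hT₀
      have hTle : T ≤ U ⊓ W := Submodule.map_subtype_le _ _
      obtain ⟨Z, hZ, hZuniq⟩ := hP.2 T hTd
      exact hne ((hZuniq W ⟨hW, hTle.trans inf_le_right⟩).trans
        (hZuniq U ⟨hU, hTle.trans inf_le_left⟩).symm)
    refine ⟨hd, fun hWU => ?_⟩
    obtain ⟨Z, hZ, hZuniq⟩ := hP.2 W hd
    exact hne ((hZuniq W ⟨hW, le_rfl⟩).trans (hZuniq U ⟨hU, hWU⟩).symm)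
  -- every t-subspace not contained in U is a member
  have mem : ∀ T : Submodule F (Fin (t + 2) → F), finrank F T = t → ¬ T ≤ U → T ∈ P := by
    intro T hTd hTU
    obtain ⟨Z, ⟨hZP, hTZ⟩, _⟩ := hP.2 T hTd
    have hZU : Z ≠ U := fun h => hTU (h ▸ hTZ)
    have hZd := (key Z hZP hZU).1
    have hTZ' : T = Z := Submodule.eq_of_le_of_finrank_le hTZ (by rw [hZd, hTd])
    rwa [hTZ']
  refine ⟨U, hUdim, ?_, ?_, ?_⟩
  · ext W
    constructor
    · intro hW
      rcases eq_or_ne W U with rfl | hne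
      · exact Set.mem_insert _ _
      · exact Set.mem_insert_of_mem _ (key W hW hne)
    · intro hW
      rcases Set.mem_insert_iff.mp hW with rfl | hW
      · exact hU
      · exact mem W hW.1 hW.2
  · have : {W ∈ P | finrank F W = t + 1} = {U} := by
      ext W
      simp only [Set.mem_setOf_eq, Set.mem_singleton_iff]
      constructor
      · rintro ⟨hWP, hWd⟩
        by_contra hne
        have := (key W hWP hne).1
        omega
      · rintro rfl
        exact ⟨hU, hUdim⟩
    rw [this, Set.ncard_singleton]
  · have hset : {W ∈ P | finrank F W = t} =
        {T : Submodule F (Fin (t + 2) → F) | finrank F T = t} \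
        {T : Submodule F (Fin (t + 2) → F) | finrank F T = t ∧ T ≤ U} := by
      ext W
      simp only [Set.mem_setOf_eq, Set.mem_diff]
      constructor
      · rintro ⟨hWP, hWd⟩
        have hne : W ≠ U := fun h => by rw [h, hUdim] at hWd; omega
        exact ⟨hWd, fun h => (key W hWP hne).2 h.2⟩
      · rintro ⟨hWd, hWU⟩
        exact ⟨mem W hWd (fun h => hWU ⟨hWd, h⟩), hWd⟩
    rw [hset, Set.ncard_diff (fun x hx => hx.1) (Set.toFinite _)]
    have hcard1 : {T : Submodule F (Fin (t + 2) → F) | finrank F T = t}.ncard =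
        gaussBinom (Fintype.card F) (t + 2) t := by
      rw [← Nat.card_coe_set_eq]
      exact card_grassmannian (t + 2) t (Fin (t + 2) → F) hdimV
    have hcard2 : {T : Submodule F (Fin (t + 2) → F) | finrank F T = t ∧ T ≤ U}.ncard =
        gaussBinom (Fintype.card F) (t + 1) t := by
      rw [← Nat.card_coe_set_eq]
      have e : {T : Submodule F (Fin (t + 2) → F) // finrank F T = t ∧ T ≤ U} ≃
          {T' : Submodule F U // finrank F T' = t} :=
        { toFun := fun W => ⟨W.1.comap U.subtype, by
            rw [← Submodule.finrank_map_subtype_eq U, Submodule.map_comap_subtype,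
              inf_eq_right.mpr W.2.2, W.2.1]⟩
          invFun := fun T' => ⟨T'.1.map U.subtype,
            by rw [Submodule.finrank_map_subtype_eq]; exact T'.2,
            Submodule.map_subtype_le _ _⟩
          left_inv := fun W => Subtype.ext <| by
            show (W.1.comap U.subtype).map U.subtype = W.1
            rw [Submodule.map_comap_subtype, inf_eq_right.mpr W.2.2]
          right_inv := fun T' => Subtype.ext <| by
            show (T'.1.map U.subtype).comap U.subtype = T'.1
            rw [Submodule.comap_map_eq, Submodule.ker_subtype, sup_bot_eq] }
      exact (Nat.card_congr e).trans (card_grassmannian (t + 1) t (↥U) hUdim)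
    rw [hcard1, hcard2]
end

section
/- Let q be a prime power and k, t, v non-negative integers with k ≥ t + 2 and v ≥ 2k − t + 1. Then there exists a vector space (t+1)-partition of 𝔽_q^v of type (v−k+t)^1 k^m (t+1)^⋆, where m = q^{max{k, v−k} · (min{k, v−k} − k + t + 1)}; that is, a vector space (t+1)-partition containing exactly one (v−k+t)-dimensional subspace, exactly m k-dimensional subspaces, and otherwise only (t+1)-dimensional subspaces. -/
open Module

open Polynomial

section Helpers

variable {F : Type} [Field F]

lemma finrank_comap_le {M N : Type*} [AddCommGroup M] [Module F M]
    [AddCommGroup N] [Module F N] [FiniteDimensional F M] [FiniteDimensional F N]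
    (f : M →ₗ[F] N) (W : Submodule F N) :
    finrank F (W.comap f) ≤ finrank F (LinearMap.ker f) + finrank F W := by
  set f' : ↥(W.comap f) →ₗ[F] ↥W := f.restrict (fun x hx => hx) with hf'
  have h1 : finrank F (LinearMap.range f') + finrank F (LinearMap.ker f')
      = finrank F (W.comap f) := LinearMap.finrank_range_add_finrank_ker f'
  have h2 : finrank F (LinearMap.range f') ≤ finrank F W := Submodule.finrank_le _
  have h3 : finrank F (LinearMap.ker f') ≤ finrank F (LinearMap.ker f) := by
    have hg : ∀ x : LinearMap.ker f', f ((x : ↥(W.comap f)) : M) = 0 := by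
      intro x
      have hx := x.2
      rw [LinearMap.mem_ker] at hx
      exact congrArg Subtype.val hx
    let g : ↥(LinearMap.ker f') →ₗ[F] ↥(LinearMap.ker f) :=
      { toFun := fun x => ⟨((x : ↥(W.comap f)) : M), by
          simpa [LinearMap.mem_ker] using hg x⟩
        map_add' := fun x y => by ext; simp
        map_smul' := fun a x => by ext; simp }
    have hginj : Function.Injective g := by
      intro x y h
      have h2 := congrArg (fun z => ((z : ↥(LinearMap.ker f)) : M)) h
      apply Subtype.ext; apply Subtype.ext
      exact h2
    exact LinearMap.finrank_le_finrank_of_injective hginj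
  omega

lemma vsp_aux {v : ℕ} (t : ℕ) (B : Set (Submodule F (Fin v → F)))
    (hdim : ∀ U ∈ B, t + 1 ≤ finrank F U)
    (hpair : ∀ U₁ ∈ B, ∀ U₂ ∈ B, U₁ ≠ U₂ →
      finrank F ↥(U₁ ⊓ U₂) ≤ t) :
    IsVSPartition (t + 1) (B ∪ {T | finrank F T = t + 1 ∧ ∀ U ∈ B, ¬ T ≤ U}) := by
  constructor
  · rintro U (hU | ⟨h1, -⟩)
    · exact hdim U hU
    · exact h1.ge
  · intro T hT
    by_cases hex : ∃ U ∈ B, T ≤ U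
    · obtain ⟨U, hU, hTU⟩ := hex
      refine ⟨U, ⟨Or.inl hU, hTU⟩, ?_⟩
      rintro U' ⟨(hU' | ⟨h1', h2'⟩), hTU'⟩
      · by_contra hne
        have h3 := hpair U' hU' U hU hne
        have h4 : finrank F T ≤ finrank F ↥(U' ⊓ U) :=
          Submodule.finrank_mono (le_inf hTU' hTU)
        omega
      · exfalso
        have hTE : T = U' :=
          Submodule.eq_of_le_of_finrank_le hTU' (by rw [hT, h1'])
        exact h2' U hU (hTE ▸ hTU)
    · push_neg at hex
      refine ⟨T, ⟨Or.inr ⟨hT, hex⟩, le_refl T⟩, ?_⟩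
      rintro U' ⟨(hU' | ⟨h1', -⟩), hTU'⟩
      · exact absurd hTU' (hex U' hU')
      · exact (Submodule.eq_of_le_of_finrank_le hTU' (by rw [hT, h1'])).symm

end Helpers

lemma ker_bound {F K : Type} [Field F] [Fintype F] [Field K] [Fintype K] [Algebra F K]
    {q κ : ℕ} (hq : Fintype.card F = q) (hq2 : 1 < q) {c : Fin κ → K} (hc : c ≠ 0)
    (ℓ : K →ₗ[F] K) (hℓ : ∀ x, ℓ x = ∑ i : Fin κ, c i * x ^ q ^ (i : ℕ)) :
    finrank F (LinearMap.ker ℓ) ≤ κ - 1 := by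
  classical
  have hex : ∃ i, c i ≠ 0 := by
    by_contra h
    push_neg at h
    exact hc (funext fun i => h i)
  obtain ⟨i₀, hi₀⟩ := hex
  set f : K[X] := ∑ i : Fin κ, C (c i) * X ^ q ^ (i : ℕ) with hf
  have hcoeff : f.coeff (q ^ (i₀ : ℕ)) = c i₀ := by
    rw [hf, Polynomial.finset_sum_coeff]
    rw [Finset.sum_eq_single i₀]
    · simp [coeff_C_mul, coeff_X_pow]
    · intro i _ hi
      rw [coeff_C_mul, coeff_X_pow, if_neg, mul_zero]
      intro h
      exact hi (Fin.ext ((Nat.pow_right_injective hq2 h.symm)))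
    · intro h
      exact absurd (Finset.mem_univ i₀) h
  have hf0 : f ≠ 0 := by
    intro h
    rw [h, coeff_zero] at hcoeff
    exact hi₀ hcoeff.symm
  have hdeg : f.natDegree ≤ q ^ (κ - 1) := by
    rw [hf]
    apply Polynomial.natDegree_sum_le_of_forall_le
    intro i _
    refine le_trans (natDegree_C_mul_le _ _) ?_
    rw [natDegree_X_pow]
    refine Nat.pow_le_pow_right (by omega) (by omega)
  have hroot : ∀ x : K, x ∈ LinearMap.ker ℓ → f.IsRoot x := by
    intro x hx
    rw [LinearMap.mem_ker, hℓ] at hx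
    rw [IsRoot.def, hf, eval_finset_sum]
    simpa using hx
  haveI : Fintype ↥(LinearMap.ker ℓ) := Fintype.ofFinite _
  have h1 : Fintype.card ↥(LinearMap.ker ℓ) ≤ Fintype.card ↥(f.roots.toFinset) := by
    refine Fintype.card_le_of_injective
      (fun x => ⟨x.1, by rw [Multiset.mem_toFinset, mem_roots hf0]; exact hroot x.1 x.2⟩) ?_
    intro a b h
    exact Subtype.ext (congrArg Subtype.val h :)
  have h2 : Fintype.card ↥(f.roots.toFinset) = f.roots.toFinset.card := Fintype.card_coe _
  have h3 : f.roots.toFinset.card ≤ f.natDegree :=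
    le_trans (Multiset.toFinset_card_le _) (Polynomial.card_roots' f)
  have h4 : Fintype.card ↥(LinearMap.ker ℓ) = q ^ finrank F (LinearMap.ker ℓ) := by
    rw [← hq]; exact card_eq_pow_finrank
  have : q ^ finrank F (LinearMap.ker ℓ) ≤ q ^ (κ - 1) := by omega
  exact (Nat.pow_le_pow_iff_right hq2).1 this

theorem mrd_aux (q k t v p : ℕ) (F K : Type) [Field F] [Fintype F]
    [Field K] [Fintype K] [Algebra F K] [CharP F p] (hpp : p.Prime)
    (hq : Fintype.card F = q)
    (hrank : finrank F K = max k (v - k))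
    (hk : t + 2 ≤ k) (hv : 2 * k + 1 ≤ v + t) :
    ∃ P : Set (Submodule F (Fin v → F)), IsVSPartition (t + 1) P ∧
      {U ∈ P | finrank F U = v - k + t}.ncard = 1 ∧
      {U ∈ P | finrank F U = k}.ncard
        = q ^ (max k (v - k) * (min k (v - k) + t + 1 - k)) ∧
      ∀ U ∈ P, finrank F U = v - k + t ∨ finrank F U = k ∨ finrank F U = t + 1 := by
  classical
  obtain ⟨e, hpp', he⟩ := FiniteField.card F p
  have hq2 : 1 < q := hq ▸ Fintype.one_lt_card
  set n := max k (v - k) with hn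
  set κ := min k (v - k) + t + 1 - k with hκdef
  have hkv : k ≤ v := by omega
  have hkn : k ≤ n := le_max_left _ _
  have hvkn : v - k ≤ n := le_max_right _ _
  have hκ1 : 1 ≤ κ := by omega
  have hsum : (κ - 1) + (n - (v - k)) = t := by omega
  have htk : t ≤ k := by omega
  haveI : CharP K p := charP_of_injective_algebraMap (algebraMap F K).injective p
  haveI : ExpChar K p := ExpChar.prime hpp
  have hqe : q = p ^ (e : ℕ) := by rw [← hq, he]
  have hqpow : ∀ (i : ℕ) (x y : K), (x + y) ^ q ^ i = x ^ q ^ i + y ^ q ^ i := by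
    intro i x y
    have hpe : q ^ i = p ^ ((e : ℕ) * i) := by rw [hqe, ← pow_mul]
    rw [hpe]
    exact add_pow_expChar_pow x y _ _
  have hsmul : ∀ (i : ℕ) (a : F) (x : K), (a • x) ^ q ^ i = a • x ^ q ^ i := by
    intro i a x
    rw [Algebra.smul_def, Algebra.smul_def, mul_pow, ← map_pow,
      show a ^ q ^ i = a by rw [← hq]; exact FiniteField.pow_card_pow i a]
  -- the q-polynomial maps
  let ℓ : (Fin κ → K) → (K →ₗ[F] K) := fun c =>
    { toFun := fun x => ∑ i : Fin κ, c i * x ^ q ^ (i : ℕ)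
      map_add' := fun x y => by
        rw [← Finset.sum_add_distrib]
        exact Finset.sum_congr rfl fun i _ => by rw [hqpow, mul_add]
      map_smul' := fun a x => by
        simp only [RingHom.id_apply]
        show ∑ i : Fin κ, c i * (a • x) ^ q ^ (i : ℕ)
          = a • ∑ i : Fin κ, c i * x ^ q ^ (i : ℕ)
        rw [Finset.smul_sum]
        exact Finset.sum_congr rfl fun i _ => by rw [hsmul, mul_smul_comm] }
  -- embeddings
  let eK : K ≃ₗ[F] (Fin n → F) :=
    LinearEquiv.ofFinrankEq _ _ (by rw [hrank, Module.finrank_fin_fun])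
  let ιe : (Fin k → F) →ₗ[F] (Fin n → F) :=
    Function.ExtendByZero.linearMap F (Fin.castLE hkn)
  let ι : (Fin k → F) →ₗ[F] K := eK.symm.toLinearMap ∘ₗ ιe
  have hιinj : Function.Injective ι := by
    apply Function.Injective.comp eK.symm.injective
    intro x y h
    funext i
    have h2 := congrFun h (Fin.castLE hkn i)
    simpa [ιe, Function.ExtendByZero.linearMap_apply,
      (Fin.castLE_injective hkn).extend_apply] using h2
  let π : K →ₗ[F] (Fin (v - k) → F) :=
    (LinearMap.funLeft F F (Fin.castLE hvkn)) ∘ₗ eK.toLinearMap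
  have hπsurj : Function.Surjective π := by
    intro y
    refine ⟨eK.symm (Function.extend (Fin.castLE hvkn) y 0), ?_⟩
    show LinearMap.funLeft F F (Fin.castLE hvkn) (eK (eK.symm _)) = y
    rw [eK.apply_symm_apply]
    funext i
    rw [LinearMap.funLeft_apply]
    exact (Fin.castLE_injective hvkn).extend_apply y 0 i
  have hkerπ : finrank F (LinearMap.ker π) + (v - k) = n := by
    have h := LinearMap.finrank_range_add_finrank_ker π
    rw [LinearMap.range_eq_top.2 hπsurj, finrank_top, Module.finrank_fin_fun, hrank] at h
    omega
  -- the MRD code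
  let A : (Fin κ → K) → ((Fin k → F) →ₗ[F] (Fin (v - k) → F)) := fun c => (π ∘ₗ ℓ c) ∘ₗ ι
  have hℓsub : ∀ c c' : Fin κ → K, ℓ (c - c') = ℓ c - ℓ c' := by
    intro c c'
    apply LinearMap.ext
    intro x
    rw [LinearMap.sub_apply]
    show ∑ i : Fin κ, (c i - c' i) * x ^ q ^ (i : ℕ)
      = (∑ i : Fin κ, c i * x ^ q ^ (i : ℕ)) - ∑ i : Fin κ, c' i * x ^ q ^ (i : ℕ)
    rw [← Finset.sum_sub_distrib]
    exact Finset.sum_congr rfl fun i _ => sub_mul _ _ _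
  have hAsub : ∀ c c' : Fin κ → K, A (c - c') = A c - A c' := by
    intro c c'
    apply LinearMap.ext
    intro x
    simp [A, hℓsub, LinearMap.sub_apply]
  have hker : ∀ c : Fin κ → K, c ≠ 0 → finrank F (LinearMap.ker (A c)) ≤ t := by
    intro c hc
    have hb1 : finrank F (LinearMap.ker (ℓ c)) ≤ κ - 1 :=
      ker_bound hq hq2 hc (ℓ c) (fun x => rfl)
    have heq : LinearMap.ker (A c) = Submodule.comap ι (LinearMap.ker (π ∘ₗ ℓ c)) :=
      LinearMap.ker_comp _ _
    have hb2 : finrank F (LinearMap.ker (π ∘ₗ ℓ c)) ≤ (κ - 1) + (n - (v - k)) := by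
      rw [LinearMap.ker_comp]
      refine le_trans (finrank_comap_le _ _) ?_
      omega
    rw [heq]
    refine le_trans (finrank_comap_le ι _) ?_
    have hbot : finrank F (LinearMap.ker ι) = 0 := by
      rw [LinearMap.ker_eq_bot.2 hιinj, finrank_bot]
    omega
  have hAinj : Function.Injective A := by
    intro c c' h
    by_contra hne
    have hcc : c - c' ≠ 0 := sub_ne_zero.2 hne
    have h0 : A (c - c') = 0 := by rw [hAsub, h, sub_self]
    have hb := hker _ hcc
    rw [h0, LinearMap.ker_zero, finrank_top, Module.finrank_fin_fun] at hb
    omega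
  -- the special subspace
  let ιt : (Fin t → F) →ₗ[F] (Fin k → F) :=
    Function.ExtendByZero.linearMap F (Fin.castLE htk)
  have hιtinj : Function.Injective ιt := by
    intro x y h
    funext i
    have h2 := congrFun h (Fin.castLE htk i)
    simpa [ιt, Function.ExtendByZero.linearMap_apply,
      (Fin.castLE_injective htk).extend_apply] using h2
  let T₀ : Submodule F (Fin k → F) := LinearMap.range ιt
  have hT₀ : finrank F T₀ = t := by
    rw [LinearMap.finrank_range_of_inj hιtinj, Module.finrank_fin_fun]
  let S : Submodule F ((Fin k → F) × (Fin (v - k) → F)) := T₀.prod ⊤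
  -- finrank of S
  have hSrank : finrank F S = t + (v - k) := by
    let eS : ↥S ≃ₗ[F] (↥T₀ × ↥(⊤ : Submodule F (Fin (v - k) → F))) :=
      { toFun := fun z => (⟨z.1.1, z.2.1⟩, ⟨z.1.2, z.2.2⟩)
        invFun := fun w => ⟨(w.1.1, w.2.1), ⟨w.1.2, w.2.2⟩⟩
        left_inv := fun z => rfl
        right_inv := fun w => rfl
        map_add' := fun z w => rfl
        map_smul' := fun a z => rfl }
    rw [eS.finrank_eq, Module.finrank_prod, hT₀, finrank_top, Module.finrank_fin_fun]
  have hGrank : ∀ c : Fin κ → K, finrank F (LinearMap.graph (A c)) = k := by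
    intro c
    have hprodinj : Function.Injective (LinearMap.id.prod (A c)) := by
      intro a b h
      exact congrArg Prod.fst h
    rw [LinearMap.graph_eq_range_prod]
    rw [LinearMap.finrank_range_of_inj hprodinj, Module.finrank_fin_fun]
  have hgraphinj : Function.Injective
      (LinearMap.graph : ((Fin k → F) →ₗ[F] (Fin (v - k) → F)) → _) := by
    intro f g h
    apply LinearMap.ext
    intro x
    have hm : (x, f x) ∈ LinearMap.graph g := by
      rw [← h, LinearMap.mem_graph_iff]
    rwa [LinearMap.mem_graph_iff] at hm
  -- intersection bounds
  have hSG : ∀ c : Fin κ → K, finrank F ↥(S ⊓ LinearMap.graph (A c)) ≤ t := by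
    intro c
    rw [← hT₀]
    refine LinearMap.finrank_le_finrank_of_injective
      (f := { toFun := fun (z : ↥(S ⊓ LinearMap.graph (A c))) =>
                (⟨z.1.1, (Submodule.mem_prod.1 z.2.1).1⟩ : ↥T₀)
              map_add' := fun z w => rfl
              map_smul' := fun a z => rfl }) ?_
    intro z w h
    have h1 : z.1.1 = w.1.1 := congrArg Subtype.val h
    have hz := (LinearMap.mem_graph_iff _ _).1 z.2.2
    have hw := (LinearMap.mem_graph_iff _ _).1 w.2.2
    apply Subtype.ext
    apply Prod.ext h1
    rw [hz, hw, h1]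
  have hGG : ∀ c c' : Fin κ → K, c ≠ c' →
      finrank F ↥(LinearMap.graph (A c) ⊓ LinearMap.graph (A c')) ≤ t := by
    intro c c' hcc
    refine le_trans (LinearMap.finrank_le_finrank_of_injective
      (f := { toFun := fun (z : ↥(LinearMap.graph (A c) ⊓ LinearMap.graph (A c'))) =>
                (⟨z.1.1, by
                  rw [LinearMap.mem_ker, hAsub, LinearMap.sub_apply,
                    ← (LinearMap.mem_graph_iff _ _).1 z.2.1,
                    ← (LinearMap.mem_graph_iff _ _).1 z.2.2, sub_self]⟩ :
                  ↥(LinearMap.ker (A (c - c'))))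
              map_add' := fun z w => rfl
              map_smul' := fun a z => rfl }) ?_) (hker _ (sub_ne_zero.2 hcc))
    intro z w h
    have h1 : z.1.1 = w.1.1 := congrArg Subtype.val h
    have hz := (LinearMap.mem_graph_iff _ _).1 z.2.1
    have hw := (LinearMap.mem_graph_iff _ _).1 w.2.1
    apply Subtype.ext
    apply Prod.ext h1
    rw [hz, hw, h1]
  -- transporting to Fin v → F
  have hvsplit : k + (v - k) = v := by omega
  let E : (Fin v → F) ≃ₗ[F] ((Fin k → F) × (Fin (v - k) → F)) :=
    (LinearEquiv.funCongrLeft F F (finCongr hvsplit)).trans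
      ((LinearEquiv.funCongrLeft F F finSumFinEquiv).trans
        (LinearEquiv.sumArrowLequivProdArrow _ _ F F))
  let Φ : Submodule F ((Fin k → F) × (Fin (v - k) → F)) → Submodule F (Fin v → F) :=
    fun U => U.map (E.symm : _ →ₗ[F] _)
  have hΦinj : Function.Injective Φ := Submodule.map_injective_of_injective E.symm.injective
  have hΦrank : ∀ U, finrank F (Φ U) = finrank F U := fun U =>
    LinearEquiv.finrank_map_eq E.symm U
  have hΦinf : ∀ U U', Φ (U ⊓ U') = Φ U ⊓ Φ U' := fun U U' =>
    Submodule.map_inf _ E.symm.injective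
  -- the big members
  let B : Set (Submodule F (Fin v → F)) :=
    insert (Φ S) (Set.range fun c : Fin κ → K => Φ (LinearMap.graph (A c)))
  have hd_S : finrank F (Φ S) = v - k + t := by rw [hΦrank, hSrank]; omega
  have hd_G : ∀ c, finrank F (Φ (LinearMap.graph (A c))) = k := by
    intro c; rw [hΦrank, hGrank]
  have hO1 : k < v - k + t := by omega
  have hO2 : t + 1 < v - k + t := by omega
  have hO3 : t + 1 < k := by omega
  have hBdim : ∀ U ∈ B, t + 1 ≤ finrank F U := by
    intro U hU
    rcases Set.mem_insert_iff.1 hU with rfl | ⟨c, rfl⟩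
    · rw [hd_S]; omega
    · rw [hd_G]; omega
  have hBpair : ∀ U₁ ∈ B, ∀ U₂ ∈ B, U₁ ≠ U₂ → finrank F ↥(U₁ ⊓ U₂) ≤ t := by
    intro U₁ hU₁ U₂ hU₂ hne
    rcases Set.mem_insert_iff.1 hU₁ with rfl | ⟨c, rfl⟩ <;>
      rcases Set.mem_insert_iff.1 hU₂ with h2 | ⟨c', rfl⟩
    · exact absurd h2.symm hne
    · rw [← hΦinf, hΦrank]
      exact hSG c'
    · subst h2
      rw [← hΦinf, hΦrank, inf_comm]
      exact hSG c
    · have hcc : c ≠ c' := by rintro rfl; exact hne rfl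
      rw [← hΦinf, hΦrank]
      exact hGG c c' hcc
  -- final partition
  refine ⟨B ∪ {T | finrank F T = t + 1 ∧ ∀ U ∈ B, ¬ T ≤ U}, vsp_aux t B hBdim hBpair, ?_, ?_, ?_⟩
  · -- exactly one member of dimension v - k + t
    have hset : {U ∈ B ∪ {T | finrank F T = t + 1 ∧ ∀ U ∈ B, ¬ T ≤ U} |
        finrank F U = v - k + t} = {Φ S} := by
      ext U
      simp only [Set.mem_setOf_eq, Set.mem_singleton_iff]
      constructor
      · rintro ⟨hUP, hUr⟩
        rcases hUP with hUB | hUR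
        · rcases Set.mem_insert_iff.1 hUB with rfl | ⟨c, rfl⟩
          · rfl
          · rw [hd_G] at hUr; omega
        · rw [hUR.1] at hUr; omega
      · rintro rfl
        exact ⟨Or.inl (Set.mem_insert _ _), hd_S⟩
    rw [hset, Set.ncard_singleton]
  · -- exactly q ^ (n * κ) members of dimension k
    have hset : {U ∈ B ∪ {T | finrank F T = t + 1 ∧ ∀ U ∈ B, ¬ T ≤ U} |
        finrank F U = k} = Set.range fun c : Fin κ → K => Φ (LinearMap.graph (A c)) := by
      ext U
      simp only [Set.mem_setOf_eq, Set.mem_range]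
      constructor
      · rintro ⟨hUP, hUr⟩
        rcases hUP with hUB | hUR
        · rcases Set.mem_insert_iff.1 hUB with rfl | ⟨c, rfl⟩
          · rw [hd_S] at hUr; omega
          · exact ⟨c, rfl⟩
        · rw [hUR.1] at hUr; omega
      · rintro ⟨c, rfl⟩
        exact ⟨Or.inl (Set.mem_insert_iff.2 (Or.inr ⟨c, rfl⟩)), hd_G c⟩
    rw [hset]
    have hinjcomp : Function.Injective (fun c : Fin κ → K => Φ (LinearMap.graph (A c))) :=
      hΦinj.comp (hgraphinj.comp hAinj)
    rw [← Set.image_univ, Set.ncard_image_of_injective _ hinjcomp, Set.ncard_univ,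
      Nat.card_eq_fintype_card, Fintype.card_fun, Fintype.card_fin]
    have hcK : Fintype.card K = q ^ n := by
      rw [← hq, card_eq_pow_finrank (K := F) (V := K), hq, hrank]
    rw [hcK, ← pow_mul]
  · rintro U (hUB | hUR)
    · rcases Set.mem_insert_iff.1 hUB with rfl | ⟨c, rfl⟩
      · exact Or.inl (hd_S)
      · exact Or.inr (Or.inl (hd_G c))
    · exact Or.inr (Or.inr hUR.1)


lemma finrank_splitting (F : Type) [Field F] [Fintype F] (p : ℕ) [CharP F p] (n : ℕ)
    (hn : n ≠ 0) :
    finrank F (X ^ Fintype.card F ^ n - X : F[X]).SplittingField = n := by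
  classical
  obtain ⟨e, hpp, he⟩ := FiniteField.card F p
  set q := Fintype.card F with hqdef
  have hq2 : 1 < q := Fintype.one_lt_card
  set g : F[X] := X ^ q ^ n - X with hg
  set K := g.SplittingField with hK
  haveI : Finite K := Module.finite_of_finite F
  haveI : Fintype K := Fintype.ofFinite K
  haveI : CharP K p := charP_of_injective_algebraMap (algebraMap F K).injective p
  haveI : ExpChar K p := ExpChar.prime hpp
  have hqn1 : 1 < q ^ n := Nat.one_lt_pow hn hq2
  have aux : g ≠ 0 := FiniteField.X_pow_card_sub_X_ne_zero _ hqn1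
  have hpq : p ∣ q ^ n := dvd_pow (he ▸ dvd_pow_self p e.pos.ne') hn
  have sep : g.Separable := galois_poly_separable p (q ^ n) hpq
  have key : Fintype.card (g.rootSet K) = g.natDegree :=
    card_rootSet_eq_natDegree sep (SplittingField.splits g)
  have hdeg : g.natDegree = q ^ n := FiniteField.X_pow_card_sub_X_natDegree_eq _ hqn1
  have hmem : ∀ x : K, x ∈ g.rootSet K ↔ x ^ q ^ n = x := by
    intro x
    have haev : (aeval x) g = x ^ q ^ n - x := by
      show (aeval x) (X ^ q ^ n - X : F[X]) = x ^ q ^ n - x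
      simp
    rw [mem_rootSet_of_ne aux, haev, sub_eq_zero]
  have hqnp : q ^ n = p ^ ((e : ℕ) * n) := by rw [he, ← pow_mul]
  have hcomm : ∀ r : F, (algebraMap F K r) ^ q ^ n = algebraMap F K r := by
    intro r
    rw [← map_pow, FiniteField.pow_card_pow]
  let ψ : K →+* K := iterateFrobenius K p ((e : ℕ) * n)
  have hψ : ∀ x : K, ψ x = x ^ q ^ n := by
    intro x; rw [iterateFrobenius_def, ← hqnp]
  let φ : K →ₐ[F] K := AlgHom.mk' ψ (by
    intro c x
    rw [Algebra.smul_def, Algebra.smul_def, map_mul, hψ, hψ, hcomm])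
  have huniv : ∀ x : K, x ^ q ^ n = x := by
    have htop : Algebra.adjoin F (g.rootSet K) = ⊤ :=
      Polynomial.SplittingField.adjoin_rootSet g
    have hle : Algebra.adjoin F (g.rootSet K) ≤ AlgHom.equalizer φ (AlgHom.id F K) := by
      apply Algebra.adjoin_le
      intro x hx
      rw [SetLike.mem_coe, AlgHom.mem_equalizer]
      show ψ x = x
      rw [hψ]
      exact (hmem x).1 hx
    intro x
    have : x ∈ AlgHom.equalizer φ (AlgHom.id F K) := by
      apply hle
      rw [htop]
      exact Algebra.mem_top
    have h2 : ψ x = x := this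
    rwa [hψ] at h2
  have hcard : Fintype.card K = q ^ n := by
    rw [← hdeg, ← key]
    apply Fintype.card_congr
    apply (Equiv.Set.univ K).symm.trans
    apply Equiv.setCongr
    symm
    rw [Set.eq_univ_iff_forall]
    intro x
    exact (hmem x).2 (huniv x)
  have hfr : Fintype.card K = q ^ finrank F K := card_eq_pow_finrank
  rw [hcard] at hfr
  exact (Nat.pow_right_injective hq2 hfr).symm

/-- For `k ≥ t + 2` and `v ≥ 2k − t + 1` there exists a vector space `(t+1)`-partition
of `F_q^v` of type `(v−k+t)^1 k^m (t+1)^⋆` with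
`m = q^(max{k, v−k} · (min{k, v−k} − k + t + 1))`. -/
theorem mrd_construction (q k t v : ℕ)
    (F : Type) [Field F] [Fintype F] (hq : Fintype.card F = q)
    (hk : t + 2 ≤ k) (hv : 2 * k + 1 ≤ v + t) :
    ∃ P : Set (Submodule F (Fin v → F)), IsVSPartition (t + 1) P ∧
      {U ∈ P | finrank F U = v - k + t}.ncard = 1 ∧
      {U ∈ P | finrank F U = k}.ncard
        = q ^ (max k (v - k) * (min k (v - k) + t + 1 - k)) ∧
      ∀ U ∈ P, finrank F U = v - k + t ∨ finrank F U = k ∨ finrank F U = t + 1 := by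
  classical
  haveI : CharP F (ringChar F) := ringChar.charP F
  obtain ⟨e, hpp, he⟩ := FiniteField.card F (ringChar F)
  have hn0 : max k (v - k) ≠ 0 := by omega
  haveI : Finite (X ^ Fintype.card F ^ max k (v - k) - X : F[X]).SplittingField :=
    Module.finite_of_finite F
  haveI : Fintype (X ^ Fintype.card F ^ max k (v - k) - X : F[X]).SplittingField :=
    Fintype.ofFinite _
  exact mrd_aux q k t v (ringChar F) F
    (X ^ Fintype.card F ^ max k (v - k) - X : F[X]).SplittingField hpp hq
    (finrank_splitting F (ringChar F) (max k (v - k)) hn0) hk hv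
end

section
/- Let q be a prime power and k, v integers with k ≥ 3 and v ≥ 2k. If 𝒫 is a vector space 2-partition of 𝔽_q^v of type (v−k+1)^1 k^a 2^⋆ (i.e., 𝒫 contains exactly one (v−k+1)-dimensional subspace, exactly a k-dimensional subspaces, and otherwise only 2-dimensional subspaces), then a ≤ q^{2(v−k)}. -/
open Module

section Helpers

variable {F : Type} [Field F] [Fintype F] {v : ℕ}

lemma ncard_submodule (A : Submodule F (Fin v → F)) :
    (A : Set (Fin v → F)).ncard = Fintype.card F ^ finrank F A := by
  haveI : Fintype A := Fintype.ofFinite A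
  rw [← Nat.card_coe_set_eq, Nat.card_eq_fintype_card]
  exact card_eq_pow_finrank

lemma ncard_diff_submodule (A B : Submodule F (Fin v → F)) (h : B ≤ A) :
    {x : Fin v → F | x ∈ A ∧ x ∉ B}.ncard
      = Fintype.card F ^ finrank F A - Fintype.card F ^ finrank F B := by
  have hset : {x : Fin v → F | x ∈ A ∧ x ∉ B} = (A : Set (Fin v → F)) \ (B : Set (Fin v → F)) := by
    ext x; simp [Set.mem_diff]
  rw [hset, Set.ncard_diff h, ncard_submodule, ncard_submodule]

lemma card_pairs {α : Type} [DecidableEq α] (X : Finset α) (Y : α → Finset α) (c : ℕ)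
    (hc : ∀ x ∈ X, (Y x).card = c) :
    (X.biUnion (fun x => {x} ×ˢ Y x)).card = X.card * c := by
  rw [Finset.card_biUnion]
  · rw [Finset.sum_congr rfl (fun x hx => by
      rw [Finset.card_product, Finset.card_singleton, one_mul, hc x hx]),
      Finset.sum_const, smul_eq_mul]
  · intro x hx y hy hxy
    simp only [Finset.disjoint_left, Finset.mem_product, Finset.mem_singleton]
    rintro ⟨a, b⟩ ⟨h1, -⟩ ⟨h2, -⟩
    exact hxy (by rw [← h1, h2])

lemma mem_pairs {α : Type} [DecidableEq α] (X : Finset α) (Y : α → Finset α) (p : α × α) :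
    p ∈ X.biUnion (fun x => {x} ×ˢ Y x) ↔ p.1 ∈ X ∧ p.2 ∈ Y p.1 := by
  obtain ⟨a, b⟩ := p
  simp only [Finset.mem_biUnion, Finset.mem_product, Finset.mem_singleton]
  constructor
  · rintro ⟨x, hx, rfl, hb⟩; exact ⟨hx, hb⟩
  · rintro ⟨ha, hb⟩; exact ⟨a, ha, rfl, hb⟩

end Helpers

/-- If `P` is a vector space `2`-partition of `F_q^v` of type `(v−k+1)^1 k^a 2^⋆`
with `k ≥ 3` and `v ≥ 2k`, then `a ≤ q^(2(v−k))`. -/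
theorem mrd_like_bound (q k v a : ℕ) (hk : 3 ≤ k) (hv : 2 * k ≤ v)
    (F : Type) [Field F] [Fintype F] (hq : Fintype.card F = q)
    (P : Set (Submodule F (Fin v → F))) (hP : IsVSPartition 2 P)
    (h1 : {U ∈ P | finrank F U = v - k + 1}.ncard = 1)
    (h2 : {U ∈ P | finrank F U = k}.ncard = a)
    (h3 : ∀ U ∈ P, finrank F U = v - k + 1 ∨ finrank F U = k ∨ finrank F U = 2) :
    a ≤ q ^ (2 * (v - k)) := by
  classical
  subst hq
  set Q := Fintype.card F with hQdef
  have hQ2 : 1 < Q := Fintype.one_lt_card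
  have hV : finrank F (Fin v → F) = v := Module.finrank_fin_fun F
  have htop : finrank F (⊤ : Submodule F (Fin v → F)) = v := by
    rw [finrank_top]; exact hV
  -- extract the unique member W of dimension v - k + 1
  rw [Set.ncard_eq_one] at h1
  obtain ⟨W, hW⟩ := h1
  have hWmem : W ∈ {U ∈ P | finrank F U = v - k + 1} := by
    rw [hW]; exact Set.mem_singleton W
  obtain ⟨hWP, hWr⟩ := hWmem
  -- key uniqueness fact: two members sharing a 2-dimensional subspace coincide
  have key : ∀ U ∈ P, ∀ U' ∈ P, ∀ x y : Fin v → F, x ∈ U → y ∈ U → x ∈ U' → y ∈ U' →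
      x ≠ 0 → y ∉ Submodule.span F {x} → U = U' := by
    intro U hU U' hU' x y hxU hyU hxU' hyU' hx0 hyx
    have hy0 : y ≠ 0 := fun h => hyx (h ▸ Submodule.zero_mem _)
    have hdisj : Submodule.span F {x} ⊓ Submodule.span F {y} = ⊥ := by
      rw [← disjoint_iff]
      exact (Submodule.disjoint_span_singleton' hy0).mpr hyx
    have hsum := Submodule.finrank_sup_add_finrank_inf_eq
      (Submodule.span F {x}) (Submodule.span F {y})
    rw [hdisj, finrank_bot, finrank_span_singleton hx0, finrank_span_singleton hy0] at hsum
    have hTrank : finrank F ↥(Submodule.span F {x} ⊔ Submodule.span F {y}) = 2 := by omega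
    obtain ⟨U0, -, hu⟩ := hP.2 _ hTrank
    have hTU : Submodule.span F {x} ⊔ Submodule.span F {y} ≤ U :=
      sup_le ((Submodule.span_singleton_le_iff_mem _ _).2 hxU)
        ((Submodule.span_singleton_le_iff_mem _ _).2 hyU)
    have hTU' : Submodule.span F {x} ⊔ Submodule.span F {y} ≤ U' :=
      sup_le ((Submodule.span_singleton_le_iff_mem _ _).2 hxU')
        ((Submodule.span_singleton_le_iff_mem _ _).2 hyU')
    exact (hu U ⟨hU, hTU⟩).trans (hu U' ⟨hU', hTU'⟩).symm
  -- dimension facts for k-dimensional members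
  have hUfacts : ∀ U : Submodule F (Fin v → F), U ∈ P → finrank F U = k →
      finrank F ↥(U ⊓ W) = 1 ∧ U ⊔ W = ⊤ := by
    intro U hU hUr
    have hne : U ≠ W := by
      intro h; rw [h, hWr] at hUr; omega
    have hsum := Submodule.finrank_sup_add_finrank_inf_eq U W
    rw [hUr, hWr] at hsum
    have hle : finrank F ↥(U ⊔ W) ≤ v := by
      have h := Submodule.finrank_le (U ⊔ W)
      rwa [hV] at h
    have hinf2 : finrank F ↥(U ⊓ W) < 2 := by
      by_contra hc
      push_neg at hc
      have hbot : U ⊓ W ≠ ⊥ := by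
        intro h; rw [h, finrank_bot] at hc; omega
      obtain ⟨x, hxmem, hx0⟩ := Submodule.exists_mem_ne_zero_of_ne_bot hbot
      have hlt : Submodule.span F {x} < U ⊓ W := by
        refine lt_of_le_of_ne ((Submodule.span_singleton_le_iff_mem _ _).2 hxmem) ?_
        intro h
        rw [← h, finrank_span_singleton hx0] at hc; omega
      obtain ⟨y, hymem, hyx⟩ := SetLike.exists_of_lt hlt
      obtain ⟨hxU, hxW⟩ := Submodule.mem_inf.1 hxmem
      obtain ⟨hyU, hyW⟩ := Submodule.mem_inf.1 hymem
      exact hne (key U hU W hWP x y hxU hyU hxW hyW hx0 hyx)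
    have hinf1 : finrank F ↥(U ⊓ W) = 1 := by omega
    refine ⟨hinf1, Submodule.eq_top_of_finrank_eq ?_⟩
    rw [hV]; omega
  -- dimension of W ⊔ span {x} for x outside W
  have hspan : ∀ x : Fin v → F, x ∉ W →
      finrank F ↥(W ⊔ Submodule.span F {x}) = v - k + 2 := by
    intro x hx
    have hx0 : x ≠ 0 := fun h => hx (h ▸ W.zero_mem)
    have hd : W ⊓ Submodule.span F {x} = ⊥ := by
      rw [← disjoint_iff]
      exact (Submodule.disjoint_span_singleton' hx0).2 hx
    have hsum := Submodule.finrank_sup_add_finrank_inf_eq W (Submodule.span F {x})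
    rw [hd, finrank_bot, finrank_span_singleton hx0, hWr] at hsum
    omega
  have hUZ : ∀ U : Submodule F (Fin v → F), U ∈ P → finrank F U = k →
      ∀ x : Fin v → F, x ∈ U → x ∉ W →
      finrank F ↥(U ⊓ (W ⊔ Submodule.span F {x})) = 2 := by
    intro U hU hUr x hxU hxW
    have hsupU := (hUfacts U hU hUr).2
    have htop2 : U ⊔ (W ⊔ Submodule.span F {x}) = ⊤ := by
      rw [eq_top_iff, ← hsupU]
      exact sup_le_sup_left le_sup_left U
    have hsum := Submodule.finrank_sup_add_finrank_inf_eq U (W ⊔ Submodule.span F {x})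
    rw [htop2, htop, hUr, hspan x hxW] at hsum
    omega
  -- finiteness
  haveI : Finite (Submodule F (Fin v → F)) :=
    Finite.of_injective (fun U => (U : Set (Fin v → F))) SetLike.coe_injective
  have hSfin : {U ∈ P | finrank F U = k}.Finite := Set.toFinite _
  set Sfin := hSfin.toFinset with hSfinDef
  have hScard : Sfin.card = a := by
    rw [← Set.ncard_eq_toFinset_card _ hSfin]; exact h2
  have hSmem : ∀ U, U ∈ Sfin → U ∈ P ∧ finrank F U = k := by
    intro U hU
    exact hSfin.mem_toFinset.1 hU
  -- the finsets of pairs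
  set XU : Submodule F (Fin v → F) → Finset (Fin v → F) :=
    fun U => (Set.toFinite {x : Fin v → F | x ∈ U ∧ x ∉ W}).toFinset with hXUdef
  set YU : Submodule F (Fin v → F) → (Fin v → F) → Finset (Fin v → F) :=
    fun U x => (Set.toFinite
      {y : Fin v → F | y ∈ U ∧ y ∉ W ⊔ Submodule.span F {x}}).toFinset with hYUdef
  set Xall : Finset (Fin v → F) :=
    (Set.toFinite {x : Fin v → F | x ∉ W}).toFinset with hXalldef
  set Yall : (Fin v → F) → Finset (Fin v → F) :=
    fun x => (Set.toFinite {y : Fin v → F | y ∉ W ⊔ Submodule.span F {x}}).toFinset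
    with hYalldef
  set AU : Submodule F (Fin v → F) → Finset ((Fin v → F) × (Fin v → F)) :=
    fun U => (XU U).biUnion (fun x => {x} ×ˢ YU U x) with hAUdef
  set B : Finset ((Fin v → F) × (Fin v → F)) :=
    Xall.biUnion (fun x => {x} ×ˢ Yall x) with hBdef
  -- cardinalities
  have hXUcard : ∀ U : Submodule F (Fin v → F), U ∈ P → finrank F U = k →
      (XU U).card = Q ^ k - Q := by
    intro U hU hUr
    have h1' := (hUfacts U hU hUr).1
    have hsetq : {x : Fin v → F | x ∈ U ∧ x ∉ W} = {x | x ∈ U ∧ x ∉ U ⊓ W} := by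
      ext x; simp only [Set.mem_setOf_eq, Submodule.mem_inf]; tauto
    rw [hXUdef]
    rw [← Set.ncard_eq_toFinset_card _ (Set.toFinite _), hsetq,
      ncard_diff_submodule _ _ inf_le_left, hUr, h1', pow_one]
  have hYUcard : ∀ U : Submodule F (Fin v → F), U ∈ P → finrank F U = k →
      ∀ x : Fin v → F, x ∈ U → x ∉ W → (YU U x).card = Q ^ k - Q ^ 2 := by
    intro U hU hUr x hxU hxW
    have h2' := hUZ U hU hUr x hxU hxW
    have hsetq : {y : Fin v → F | y ∈ U ∧ y ∉ W ⊔ Submodule.span F {x}}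
        = {y | y ∈ U ∧ y ∉ U ⊓ (W ⊔ Submodule.span F {x})} := by
      ext y; simp only [Set.mem_setOf_eq, Submodule.mem_inf]; tauto
    rw [hYUdef]
    rw [← Set.ncard_eq_toFinset_card _ (Set.toFinite _), hsetq,
      ncard_diff_submodule _ _ inf_le_left, hUr, h2']
  have hXallcard : Xall.card = Q ^ v - Q ^ (v - k + 1) := by
    have hsetq : {x : Fin v → F | x ∉ W}
        = {x | x ∈ (⊤ : Submodule F (Fin v → F)) ∧ x ∉ W} := by
      ext x; simp
    rw [hXalldef]
    rw [← Set.ncard_eq_toFinset_card _ (Set.toFinite _), hsetq,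
      ncard_diff_submodule _ _ le_top, htop, hWr]
  have hYallcard : ∀ x : Fin v → F, x ∉ W → (Yall x).card = Q ^ v - Q ^ (v - k + 2) := by
    intro x hxW
    have hsetq : {y : Fin v → F | y ∉ W ⊔ Submodule.span F {x}}
        = {y | y ∈ (⊤ : Submodule F (Fin v → F)) ∧ y ∉ W ⊔ Submodule.span F {x}} := by
      ext y; simp
    rw [hYalldef]
    rw [← Set.ncard_eq_toFinset_card _ (Set.toFinite _), hsetq,
      ncard_diff_submodule _ _ le_top, htop, hspan x hxW]
  have hAUcard : ∀ U ∈ Sfin, (AU U).card = (Q ^ k - Q) * (Q ^ k - Q ^ 2) := by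
    intro U hU
    obtain ⟨hUP, hUr⟩ := hSmem U hU
    rw [hAUdef]
    rw [card_pairs (XU U) (YU U) (Q ^ k - Q ^ 2) (fun x hx => by
      rw [hXUdef] at hx
      obtain ⟨hxU, hxW⟩ := (Set.Finite.mem_toFinset _).1 hx
      exact hYUcard U hUP hUr x hxU hxW), hXUcard U hUP hUr]
  have hBcard : B.card = (Q ^ v - Q ^ (v - k + 1)) * (Q ^ v - Q ^ (v - k + 2)) := by
    rw [hBdef]
    rw [card_pairs Xall Yall (Q ^ v - Q ^ (v - k + 2)) (fun x hx => by
      rw [hXalldef] at hx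
      exact hYallcard x ((Set.Finite.mem_toFinset _).1 hx)), hXallcard]
  -- disjointness of the AU's
  have hdisj : ∀ U ∈ Sfin, ∀ U' ∈ Sfin, U ≠ U' → Disjoint (AU U) (AU U') := by
    intro U hU U' hU' hne
    obtain ⟨hUP, hUr⟩ := hSmem U hU
    obtain ⟨hU'P, hU'r⟩ := hSmem U' hU'
    rw [Finset.disjoint_left]
    intro p hp hp'
    rw [hAUdef, mem_pairs] at hp hp'
    obtain ⟨hx1, hy1⟩ := hp
    obtain ⟨hx1', hy1'⟩ := hp'
    rw [hXUdef] at hx1 hx1'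
    rw [hYUdef] at hy1 hy1'
    obtain ⟨hxU, hxW⟩ := (Set.Finite.mem_toFinset _).1 hx1
    obtain ⟨hxU', -⟩ := (Set.Finite.mem_toFinset _).1 hx1'
    obtain ⟨hyU, hyZ⟩ := (Set.Finite.mem_toFinset _).1 hy1
    obtain ⟨hyU', -⟩ := (Set.Finite.mem_toFinset _).1 hy1'
    have hx0 : p.1 ≠ 0 := fun h => hxW (h ▸ W.zero_mem)
    have hyx : p.2 ∉ Submodule.span F {p.1} :=
      fun h => hyZ (Submodule.mem_sup_right h)
    exact hne (key U hUP U' hU'P p.1 p.2 hxU hyU hxU' hyU' hx0 hyx)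
  -- the big union is contained in B
  have hsub : Sfin.biUnion AU ⊆ B := by
    refine Finset.biUnion_subset.2 (fun U hU => ?_)
    intro p hp
    rw [hAUdef, mem_pairs] at hp
    obtain ⟨hx1, hy1⟩ := hp
    rw [hXUdef] at hx1
    rw [hYUdef] at hy1
    obtain ⟨-, hxW⟩ := (Set.Finite.mem_toFinset _).1 hx1
    obtain ⟨-, hyZ⟩ := (Set.Finite.mem_toFinset _).1 hy1
    rw [hBdef, mem_pairs]
    constructor
    · rw [hXalldef]; exact (Set.Finite.mem_toFinset _).2 hxW
    · rw [hYalldef]; exact (Set.Finite.mem_toFinset _).2 hyZ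
  -- counting
  have hmain : a * ((Q ^ k - Q) * (Q ^ k - Q ^ 2))
      ≤ (Q ^ v - Q ^ (v - k + 1)) * (Q ^ v - Q ^ (v - k + 2)) := by
    calc a * ((Q ^ k - Q) * (Q ^ k - Q ^ 2))
        = (Sfin.biUnion AU).card := by
          rw [Finset.card_biUnion hdisj,
            Finset.sum_congr rfl (fun U hU => hAUcard U hU),
            Finset.sum_const, smul_eq_mul, hScard]
      _ ≤ B.card := Finset.card_le_card hsub
      _ = _ := hBcard
  -- arithmetic
  have p1 : Q ^ k * Q ^ (v - k) = Q ^ v := by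
    rw [← pow_add]; congr 1; omega
  have p2 : Q * Q ^ (v - k) = Q ^ (v - k + 1) := by
    rw [← pow_succ']
  have p3 : Q ^ 2 * Q ^ (v - k) = Q ^ (v - k + 2) := by
    rw [← pow_add]; congr 1; omega
  have e1 : Q ^ (v - k) * (Q ^ k - Q) = Q ^ v - Q ^ (v - k + 1) := by
    rw [mul_comm, Nat.sub_mul, p1, p2]
  have e2 : Q ^ (v - k) * (Q ^ k - Q ^ 2) = Q ^ v - Q ^ (v - k + 2) := by
    rw [mul_comm, Nat.sub_mul, p1, p3]
  have e3 : (Q ^ v - Q ^ (v - k + 1)) * (Q ^ v - Q ^ (v - k + 2))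
      = Q ^ (2 * (v - k)) * ((Q ^ k - Q) * (Q ^ k - Q ^ 2)) := by
    rw [← e1, ← e2]; ring
  have hpos : 0 < (Q ^ k - Q) * (Q ^ k - Q ^ 2) := by
    have h1' : Q < Q ^ k := by
      calc Q = Q ^ 1 := (pow_one Q).symm
        _ < Q ^ k := Nat.pow_lt_pow_right hQ2 (by omega)
    have h2' : Q ^ 2 < Q ^ k := Nat.pow_lt_pow_right hQ2 (by omega)
    exact Nat.mul_pos (by omega) (by omega)
  exact Nat.le_of_mul_le_mul_right (e3 ▸ hmain) hpos
end

section
/- If 𝒫 is a vector space 2-partition of 𝔽_2^7 of type 4^{m_4} 3^{m_3} 2^⋆, then m_3 ≤ 381 − ⌈m_4(61 − m_4)/7⌉. -/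
open Module

namespace VSPAux

abbrev Kk : Type := ZMod 2
abbrev Vv : Type := Fin 7 → ZMod 2

open Finset

attribute [local instance] Classical.propDecidable

noncomputable instance : Fintype (Submodule Kk Vv) := Fintype.ofFinite _

/-- nonzero vectors of a submodule -/
noncomputable def nz (W : Submodule Kk Vv) : Finset Vv := univ.filter (fun y => y ∈ W ∧ y ≠ 0)

lemma card_submodule (W : Submodule Kk Vv) :
    (univ.filter (· ∈ W)).card = 2 ^ finrank Kk W := by
  have h1 : (univ.filter (· ∈ W)).card = Fintype.card {y : Vv // y ∈ W} :=
    (Fintype.card_subtype _).symm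
  rw [h1]
  have : Fintype.card {y : Vv // y ∈ W} = Fintype.card W := rfl
  rw [this]
  have := card_eq_pow_finrank (K := Kk) (V := W)
  simpa using this

lemma nz_card (W : Submodule Kk Vv) : (nz W).card = 2 ^ finrank Kk W - 1 := by
  have : (univ.filter (· ∈ W)).card = (nz W).card + ({(0:Vv)} : Finset Vv).card := by
    rw [← card_union_of_disjoint]
    · congr 1
      ext y
      simp only [nz, mem_union, mem_filter, mem_univ, true_and, mem_singleton]
      constructor
      · intro h; by_cases h0 : y = 0
        · exact Or.inr h0
        · exact Or.inl ⟨h, h0⟩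
      · rintro (⟨h, _⟩ | rfl)
        · exact h
        · exact W.zero_mem
    · simp [nz, Finset.disjoint_left]
  rw [card_submodule] at this
  simp only [card_singleton] at this
  omega

lemma nzx_card (W : Submodule Kk Vv) {x : Vv} (hx : x ≠ 0) (hxW : x ∈ W) :
    (nz W \ {x}).card = 2 ^ finrank Kk W - 2 := by
  have hs : ({x} : Finset Vv) ⊆ nz W := by simp [nz, hxW, hx]
  rw [card_sdiff_of_subset hs, nz_card, card_singleton]
  omega

lemma pos_rank (W : Submodule Kk Vv) (h : 1 ≤ finrank Kk W) : ∃ x, x ∈ W ∧ x ≠ 0 := by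
  have h2 : 2 ≤ 2 ^ finrank Kk W := by
    calc 2 = 2 ^ 1 := rfl
    _ ≤ 2 ^ finrank Kk W := Nat.pow_le_pow_right (by norm_num) h
  have hc : 1 ≤ (nz W).card := by rw [nz_card]; omega
  obtain ⟨x, hx⟩ := Finset.card_pos.mp hc
  simp only [nz, mem_filter] at hx
  exact ⟨x, hx.2⟩

lemma span_pair_rank {x y : Vv} (hx : x ≠ 0) (hy : y ≠ 0) (hxy : x ≠ y) :
    finrank Kk (Submodule.span Kk {x, y}) = 2 := by
  have li : LinearIndependent Kk ![x, y] := by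
    rw [LinearIndependent.pair_iff]
    intro s t hst
    have hxx : x + x = 0 := by
      have h2 : (2 : Kk) = 0 := by decide
      calc x + x = (2 : Kk) • x := (two_smul Kk x).symm
      _ = (0 : Kk) • x := by rw [h2]
      _ = 0 := zero_smul _ _
    have hs : s = 0 ∨ s = 1 := by
      have : ∀ u : Kk, u = 0 ∨ u = 1 := by decide
      exact this s
    have ht : t = 0 ∨ t = 1 := by
      have : ∀ u : Kk, u = 0 ∨ u = 1 := by decide
      exact this t
    rcases hs with rfl | rfl <;> rcases ht with rfl | rfl <;>
      simp only [zero_smul, one_smul, zero_add, add_zero] at hst ⊢ <;>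
      [exact ⟨trivial, trivial⟩; exact absurd hst hy; exact absurd hst hx;
        exact absurd (show x = y by linear_combination hxx - hst) hxy]
  have h1 : Set.range ![x, y] = {x, y} := by
    ext z
    simp only [Matrix.range_cons, Matrix.range_empty, Set.mem_insert_iff, Set.union_empty,
      Set.mem_setOf_eq, Set.mem_singleton_iff, Set.mem_union, Set.singleton_union]
    try tauto
  have := finrank_span_eq_card (R := Kk) li
  rw [h1] at this
  simpa using this


variable {P : Set (Submodule Kk Vv)}

lemma mem_unique (hP : IsVSPartition 2 P) {x y : Vv} (hx : x ≠ 0) (hy : y ≠ 0) (hxy : x ≠ y) :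
    ∃! M, M ∈ P ∧ x ∈ M ∧ y ∈ M := by
  obtain ⟨U, ⟨hUP, hU⟩, huniq⟩ := hP.2 (Submodule.span Kk {x, y}) (span_pair_rank hx hy hxy)
  refine ⟨U, ⟨hUP, hU (Submodule.subset_span (by simp)),
    hU (Submodule.subset_span (by simp))⟩, ?_⟩
  rintro M ⟨hMP, hxM, hyM⟩
  exact huniq M ⟨hMP, Submodule.span_le.2 (by simp [Set.insert_subset_iff, hxM, hyM])⟩

lemma local_sum (hP : IsVSPartition 2 P) (PF : Finset (Submodule Kk Vv))
    (hPF : ∀ M, M ∈ PF ↔ M ∈ P) {x : Vv} (hx : x ≠ 0)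
    (H : Submodule Kk Vv) (hxH : x ∈ H) :
    ∑ M ∈ PF.filter (fun M => x ∈ M), (nz (M ⊓ H) \ {x}).card
      = 2 ^ finrank Kk H - 2 := by
  rw [← nzx_card H hx hxH, ← Finset.card_biUnion ?disj]
  case disj =>
    intro M hM M' hM' hne
    rw [Function.onFun, Finset.disjoint_left]
    intro y hy hy'
    simp only [mem_sdiff, nz, mem_filter, mem_univ, true_and, mem_singleton,
      Submodule.mem_inf] at hy hy'
    obtain ⟨⟨⟨hyM, hyH⟩, hy0⟩, hyx⟩ := hy
    obtain ⟨⟨⟨hyM', _⟩, _⟩, _⟩ := hy'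
    simp only [Finset.mem_coe, mem_filter] at hM hM'
    obtain ⟨U, -, hU⟩ := mem_unique hP hx hy0 (Ne.symm hyx)
    exact hne ((hU M ⟨(hPF M).1 hM.1, hM.2, hyM⟩).trans
      (hU M' ⟨(hPF M').1 hM'.1, hM'.2, hyM'⟩).symm)
  congr 1
  ext y
  simp only [mem_biUnion, mem_filter, mem_sdiff, nz, mem_univ, true_and, mem_singleton,
    Submodule.mem_inf]
  constructor
  · rintro ⟨M, ⟨hM, hxM⟩, ⟨⟨hyM, hyH⟩, hy0⟩, hyx⟩
    exact ⟨⟨hyH, hy0⟩, hyx⟩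
  · rintro ⟨⟨hyH, hy0⟩, hyx⟩
    obtain ⟨M, ⟨hMP, hxM, hyM⟩, -⟩ := mem_unique hP hx hy0 (fun h => hyx h.symm)
    exact ⟨M, ⟨(hPF M).2 hMP, hxM⟩, ⟨⟨hyM, hyH⟩, hy0⟩, hyx⟩

lemma exists_hyperplane (A : Submodule Kk Vv) {z : Vv} (hz : z ∉ A) :
    ∃ H : Submodule Kk Vv, finrank Kk H = 6 ∧ A ≤ H ∧ z ∉ H := by
  have hzq : A.mkQ z ≠ 0 := by
    simp only [Submodule.mkQ_apply, ne_eq, Submodule.Quotient.mk_eq_zero]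
    exact hz
  obtain ⟨g, hg⟩ : ∃ g : Module.Dual Kk (Vv ⧸ A), g (A.mkQ z) ≠ 0 := by
    by_contra h
    push_neg at h
    exact hzq ((Module.forall_dual_apply_eq_zero_iff Kk _).1 h)
  set ψ : Vv →ₗ[Kk] Kk := g ∘ₗ A.mkQ with hψ
  have hψz : ψ z ≠ 0 := hg
  refine ⟨LinearMap.ker ψ, ?_, ?_, by simpa [LinearMap.mem_ker] using hψz⟩
  · have hrn := LinearMap.finrank_range_add_finrank_ker ψ
    have h7 : finrank Kk Vv = 7 := by simp
    have hle : finrank Kk (LinearMap.range ψ) ≤ 1 := by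
      have h1 := Submodule.finrank_le (LinearMap.range ψ)
      simpa using h1
    have hne : finrank Kk (LinearMap.range ψ) ≠ 0 := by
      intro h0
      have hbot : LinearMap.range ψ = ⊥ := Submodule.finrank_eq_zero.1 h0
      exact hψz (by have h := LinearMap.mem_range_self ψ z; rw [hbot, Submodule.mem_bot] at h; exact h)
    omega
  · intro a ha
    have h0 : (Submodule.Quotient.mk a : Vv ⧸ A) = 0 := (Submodule.Quotient.mk_eq_zero A).2 ha
    simp [LinearMap.mem_ker, hψ, h0]

lemma inf_rank_ge (M H : Submodule Kk Vv) :
    finrank Kk ↥M + finrank Kk ↥H ≤ 7 + finrank Kk ↥(M ⊓ H) := by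
  have h1 := Submodule.finrank_sup_add_finrank_inf_eq M H
  have h2 : finrank Kk ↥(M ⊔ H) ≤ 7 := by
    have := Submodule.finrank_le (M ⊔ H)
    simpa using this
  omega

lemma inf_rank_le (M H : Submodule Kk Vv) : finrank Kk ↥(M ⊓ H) ≤ finrank Kk ↥M :=
  Submodule.finrank_mono inf_le_left

noncomputable def pts : Finset Vv := univ.filter (fun y => y ≠ 0)

lemma pts_card : pts.card = 127 := by
  have h : pts = ({(0 : Vv)} : Finset Vv)ᶜ := by
    ext y; simp [pts]
  rw [h, Finset.card_compl, card_singleton]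
  have : Fintype.card Vv = 128 := by simp [Fintype.card_fun]
  omega

lemma pts_filter (M : Submodule Kk Vv) : pts.filter (fun x => x ∈ M) = nz M := by
  ext y; simp [pts, nz, and_comm]

lemma sum_card_filter (Q : Finset (Submodule Kk Vv)) :
    ∑ x ∈ pts, (Q.filter (fun M => x ∈ M)).card
      = ∑ M ∈ Q, (nz M).card := by
  simp only [Finset.card_filter]
  rw [Finset.sum_comm]
  refine Finset.sum_congr rfl fun M _ => ?_
  rw [← Finset.card_filter, pts_filter]


lemma split3 {β : Type} [AddCommMonoid β]
    (htype : ∀ U ∈ P, finrank Kk U = 4 ∨ finrank Kk U = 3 ∨ finrank Kk U = 2)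
    (S : Finset (Submodule Kk Vv)) (hS : ∀ M ∈ S, M ∈ P) (g : Submodule Kk Vv → β) :
    ∑ M ∈ S, g M = (∑ M ∈ S.filter (fun M : Submodule Kk Vv => finrank Kk M = 4), g M)
      + (∑ M ∈ S.filter (fun M : Submodule Kk Vv => finrank Kk M = 3), g M)
      + (∑ M ∈ S.filter (fun M : Submodule Kk Vv => finrank Kk M = 2), g M) := by
  rw [← Finset.sum_filter_add_sum_filter_not S (fun M : Submodule Kk Vv => finrank Kk M = 4) g]
  rw [← Finset.sum_filter_add_sum_filter_not
    (S.filter (fun M : Submodule Kk Vv => ¬ finrank Kk M = 4)) (fun M : Submodule Kk Vv => finrank Kk M = 3) g]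
  rw [add_assoc]
  congr 2
  · refine Finset.sum_congr ?_ (fun _ _ => rfl)
    ext M
    simp only [Finset.mem_filter]
    constructor
    · rintro ⟨⟨hMS, h4⟩, h3⟩; exact ⟨hMS, h3⟩
    · rintro ⟨hMS, h3⟩; exact ⟨⟨hMS, by omega⟩, h3⟩
  · refine Finset.sum_congr ?_ (fun _ _ => rfl)
    ext M
    simp only [Finset.mem_filter]
    constructor
    · rintro ⟨⟨hMS, h4⟩, h3⟩
      refine ⟨hMS, ?_⟩
      rcases htype M (hS M hMS) with h | h | h <;> omega
    · rintro ⟨hMS, h2⟩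
      exact ⟨⟨hMS, by omega⟩, by omega⟩

section PointAnalysis

-- local abbreviation via `def` taking args
lemma point_eq (hP : IsVSPartition 2 P)
    (htype : ∀ U ∈ P, finrank Kk U = 4 ∨ finrank Kk U = 3 ∨ finrank Kk U = 2)
    (PF : Finset (Submodule Kk Vv)) (hPF : ∀ M, M ∈ PF ↔ M ∈ P)
    {x : Vv} (hx : x ≠ 0) :
    14 * (((PF.filter (fun M => x ∈ M)).filter (fun M : Submodule Kk Vv => finrank Kk M = 4)).card)
    + 6 * (((PF.filter (fun M => x ∈ M)).filter (fun M : Submodule Kk Vv => finrank Kk M = 3)).card)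
    + 2 * (((PF.filter (fun M => x ∈ M)).filter (fun M : Submodule Kk Vv => finrank Kk M = 2)).card)
    = 126 := by
  have h := local_sum hP PF hPF hx ⊤ Submodule.mem_top
  have h7 : finrank Kk (⊤ : Submodule Kk Vv) = 7 := by
    rw [finrank_top]; simp
  rw [h7] at h
  norm_num at h
  rw [split3 htype _ (fun M hM => (hPF M).1 (Finset.mem_filter.1 hM).1)] at h
  have hsub : ∀ d : ℕ, ∀ M ∈ (PF.filter (fun M => x ∈ M)).filter
      (fun M : Submodule Kk Vv => finrank Kk M = d), (nz M \ {x}).card = 2 ^ d - 2 := by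
    intro d M hM
    simp only [Finset.mem_filter] at hM
    rw [nzx_card M hx hM.1.2, hM.2]
  rw [Finset.sum_congr rfl (hsub 4), Finset.sum_congr rfl (hsub 3),
    Finset.sum_congr rfl (hsub 2), Finset.sum_const, Finset.sum_const,
    Finset.sum_const, smul_eq_mul, smul_eq_mul, smul_eq_mul] at h
  norm_num at h
  omega

lemma parity_eq (hP : IsVSPartition 2 P)
    (htype : ∀ U ∈ P, finrank Kk U = 4 ∨ finrank Kk U = 3 ∨ finrank Kk U = 2)
    (PF : Finset (Submodule Kk Vv)) (hPF : ∀ M, M ∈ PF ↔ M ∈ P)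
    {x : Vv} (hx : x ≠ 0)
    (H : Submodule Kk Vv) (hH6 : finrank Kk ↥H = 6) (hxH : x ∈ H) :
    (2 : ZMod 4) = 2 * (((PF.filter (fun M => x ∈ M)).filter
        (fun M : Submodule Kk Vv => finrank Kk M = 4)).card : ZMod 4)
      + 2 * (((PF.filter (fun M => x ∈ M)).filter
        (fun M : Submodule Kk Vv => finrank Kk M = 3)).card : ZMod 4)
      + 2 * ((((PF.filter (fun M => x ∈ M)).filter
        (fun M : Submodule Kk Vv => finrank Kk M = 2)).filter (fun M => M ≤ H)).card : ZMod 4) := by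
  have h := local_sum hP PF hPF hx H hxH
  rw [hH6] at h
  norm_num at h
  have hc := congrArg (Nat.cast : ℕ → ZMod 4) h
  rw [Nat.cast_sum] at hc
  rw [split3 htype _ (fun M hM => (hPF M).1 (Finset.mem_filter.1 hM).1)] at hc
  have hd : ∀ M ∈ PF.filter (fun M => x ∈ M), x ∈ M ⊓ H := by
    intro M hM
    simp only [Finset.mem_filter] at hM
    exact Submodule.mem_inf.2 ⟨hM.2, hxH⟩
  -- dim-4 terms
  have h4 : ∀ M ∈ (PF.filter (fun M => x ∈ M)).filter (fun M : Submodule Kk Vv => finrank Kk M = 4),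
      (((nz (M ⊓ H) \ {x}).card : ℕ) : ZMod 4) = 2 := by
    intro M hM
    have hM' := Finset.mem_filter.1 hM
    have hge := inf_rank_ge M H
    have hle := inf_rank_le M H
    rw [hM'.2, hH6] at hge
    rw [hM'.2] at hle
    rw [nzx_card (M ⊓ H) hx (hd M hM'.1)]
    have : finrank Kk ↥(M ⊓ H) = 3 ∨ finrank Kk ↥(M ⊓ H) = 4 := by omega
    rcases this with h | h <;> rw [h] <;> decide
  have h3 : ∀ M ∈ (PF.filter (fun M => x ∈ M)).filter (fun M : Submodule Kk Vv => finrank Kk M = 3),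
      (((nz (M ⊓ H) \ {x}).card : ℕ) : ZMod 4) = 2 := by
    intro M hM
    have hM' := Finset.mem_filter.1 hM
    have hge := inf_rank_ge M H
    have hle := inf_rank_le M H
    rw [hM'.2, hH6] at hge
    rw [hM'.2] at hle
    rw [nzx_card (M ⊓ H) hx (hd M hM'.1)]
    have : finrank Kk ↥(M ⊓ H) = 2 ∨ finrank Kk ↥(M ⊓ H) = 3 := by omega
    rcases this with h | h <;> rw [h] <;> decide
  have h2 : ∀ M ∈ (PF.filter (fun M => x ∈ M)).filter (fun M : Submodule Kk Vv => finrank Kk M = 2),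
      (((nz (M ⊓ H) \ {x}).card : ℕ) : ZMod 4) = if M ≤ H then 2 else 0 := by
    intro M hM
    have hM' := Finset.mem_filter.1 hM
    have hge := inf_rank_ge M H
    have hle := inf_rank_le M H
    rw [hM'.2, hH6] at hge
    rw [hM'.2] at hle
    rw [nzx_card (M ⊓ H) hx (hd M hM'.1)]
    by_cases hMH : M ≤ H
    · rw [if_pos hMH, inf_eq_left.2 hMH, hM'.2]
      decide
    · rw [if_neg hMH]
      have hne : finrank Kk ↥(M ⊓ H) ≠ 2 := by
        intro h2'
        apply hMH
        apply inf_eq_left.1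
        apply Submodule.eq_of_le_of_finrank_le inf_le_left
        omega
      have : finrank Kk ↥(M ⊓ H) = 1 := by omega
      rw [this]
      decide
  rw [Finset.sum_congr rfl h4, Finset.sum_congr rfl h3, Finset.sum_congr rfl h2,
    Finset.sum_const, Finset.sum_ite, Finset.sum_const, Finset.sum_const] at hc
  simp only [nsmul_eq_mul, Finset.sum_const_zero] at hc
  have h62 : ((62 : ℕ) : ZMod 4) = 2 := by decide
  rw [h62] at hc
  linear_combination -hc


lemma no_1_18 (hP : IsVSPartition 2 P)
    (htype : ∀ U ∈ P, finrank Kk U = 4 ∨ finrank Kk U = 3 ∨ finrank Kk U = 2)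
    (PF : Finset (Submodule Kk Vv)) (hPF : ∀ M, M ∈ PF ↔ M ∈ P)
    {x : Vv} (hx : x ≠ 0)
    (h4 : ((PF.filter (fun M => x ∈ M)).filter
      (fun M : Submodule Kk Vv => finrank Kk M = 4)).card = 1)
    (h3 : ((PF.filter (fun M => x ∈ M)).filter
      (fun M : Submodule Kk Vv => finrank Kk M = 3)).card = 18) : False := by
  have hpe := point_eq hP htype PF hPF hx
  rw [h4, h3] at hpe
  have h2 : ((PF.filter (fun M => x ∈ M)).filter
      (fun M : Submodule Kk Vv => finrank Kk M = 2)).card = 2 := by omega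
  obtain ⟨W1, W2, hW12, hset⟩ := Finset.card_eq_two.1 h2
  have hW1 : W1 ∈ (PF.filter (fun M => x ∈ M)).filter
      (fun M : Submodule Kk Vv => finrank Kk M = 2) := by rw [hset]; simp
  have hW2 : W2 ∈ (PF.filter (fun M => x ∈ M)).filter
      (fun M : Submodule Kk Vv => finrank Kk M = 2) := by rw [hset]; simp
  simp only [Finset.mem_filter] at hW1 hW2
  have hnle : ¬ W2 ≤ W1 := by
    intro hle
    exact hW12 (Submodule.eq_of_le_of_finrank_le hle (by rw [hW1.2, hW2.2])).symm
  obtain ⟨z, hzW2, hzW1⟩ := SetLike.not_le_iff_exists.1 hnle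
  obtain ⟨H, hH6, hW1H, hzH⟩ := exists_hyperplane W1 hzW1
  have hxH : x ∈ H := hW1H hW1.1.2
  have hpar := parity_eq hP htype PF hPF hx H hH6 hxH
  rw [h4, h3] at hpar
  have hfil : ((PF.filter (fun M => x ∈ M)).filter
      (fun M : Submodule Kk Vv => finrank Kk M = 2)).filter (fun M => M ≤ H) = {W1} := by
    rw [hset]
    ext M
    simp only [Finset.mem_filter, Finset.mem_insert, Finset.mem_singleton]
    constructor
    · rintro ⟨rfl | rfl, hle⟩
      · rfl
      · exact absurd (hle hzW2) hzH
    · rintro rfl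
      exact ⟨Or.inl rfl, hW1H⟩
  rw [hfil] at hpar
  rw [Finset.card_singleton] at hpar
  exact absurd hpar (by decide)

lemma no_2_16 (hP : IsVSPartition 2 P)
    (htype : ∀ U ∈ P, finrank Kk U = 4 ∨ finrank Kk U = 3 ∨ finrank Kk U = 2)
    (PF : Finset (Submodule Kk Vv)) (hPF : ∀ M, M ∈ PF ↔ M ∈ P)
    {x : Vv} (hx : x ≠ 0)
    (h4 : ((PF.filter (fun M => x ∈ M)).filter
      (fun M : Submodule Kk Vv => finrank Kk M = 4)).card = 2)
    (h3 : ((PF.filter (fun M => x ∈ M)).filter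
      (fun M : Submodule Kk Vv => finrank Kk M = 3)).card = 16) : False := by
  have hpe := point_eq hP htype PF hPF hx
  rw [h4, h3] at hpe
  have h2 : ((PF.filter (fun M => x ∈ M)).filter
      (fun M : Submodule Kk Vv => finrank Kk M = 2)).card = 1 := by omega
  obtain ⟨W, hset⟩ := Finset.card_eq_one.1 h2
  have hW : W ∈ (PF.filter (fun M => x ∈ M)).filter
      (fun M : Submodule Kk Vv => finrank Kk M = 2) := by rw [hset]; simp
  simp only [Finset.mem_filter] at hW
  have hnle : ¬ W ≤ Submodule.span Kk {x} := by
    intro hle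
    have h1 := Submodule.finrank_mono (s := W) (t := Submodule.span Kk {x}) hle
    rw [finrank_span_singleton hx, hW.2] at h1
    omega
  obtain ⟨z, hzW, hzs⟩ := SetLike.not_le_iff_exists.1 hnle
  obtain ⟨H, hH6, hsH, hzH⟩ := exists_hyperplane (Submodule.span Kk {x}) hzs
  have hxH : x ∈ H := hsH (Submodule.mem_span_singleton_self x)
  have hpar := parity_eq hP htype PF hPF hx H hH6 hxH
  rw [h4, h3] at hpar
  have hfil : ((PF.filter (fun M => x ∈ M)).filter
      (fun M : Submodule Kk Vv => finrank Kk M = 2)).filter (fun M => M ≤ H) = ∅ := by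
    rw [hset]
    ext M
    simp only [Finset.mem_filter, Finset.mem_singleton, Finset.notMem_empty, iff_false,
      not_and]
    rintro rfl hle
    exact hzH (hle hzW)
  rw [hfil] at hpar
  rw [Finset.card_empty] at hpar
  exact absurd hpar (by decide)

lemma point_bound (hP : IsVSPartition 2 P)
    (htype : ∀ U ∈ P, finrank Kk U = 4 ∨ finrank Kk U = 3 ∨ finrank Kk U = 2)
    (PF : Finset (Submodule Kk Vv)) (hPF : ∀ M, M ∈ PF ↔ M ∈ P)
    {x : Vv} (hx : x ≠ 0) :
    6 * ((PF.filter (fun M => x ∈ M)).filter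
      (fun M : Submodule Kk Vv => finrank Kk M = 3)).card
    + 30 * ((PF.filter (fun M => x ∈ M)).filter
      (fun M : Submodule Kk Vv => finrank Kk M = 4)).card
    ≤ 126 + 6 * (((PF.filter (fun M => x ∈ M)).filter
      (fun M : Submodule Kk Vv => finrank Kk M = 4)).card
      * ((PF.filter (fun M => x ∈ M)).filter
      (fun M : Submodule Kk Vv => finrank Kk M = 4)).card) := by
  have hpe := point_eq hP htype PF hPF hx
  have h118 : ¬ (((PF.filter (fun M => x ∈ M)).filter
      (fun M : Submodule Kk Vv => finrank Kk M = 4)).card = 1 ∧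
      ((PF.filter (fun M => x ∈ M)).filter
      (fun M : Submodule Kk Vv => finrank Kk M = 3)).card = 18) := by
    rintro ⟨h1, h2⟩
    exact no_1_18 hP htype PF hPF hx h1 h2
  have h216 : ¬ (((PF.filter (fun M => x ∈ M)).filter
      (fun M : Submodule Kk Vv => finrank Kk M = 4)).card = 2 ∧
      ((PF.filter (fun M => x ∈ M)).filter
      (fun M : Submodule Kk Vv => finrank Kk M = 3)).card = 16) := by
    rintro ⟨h1, h2⟩
    exact no_2_16 hP htype PF hPF hx h1 h2
  have key : ∀ a b c : ℕ, 14*a+6*b+2*c = 126 → ¬(a=1∧b=18) → ¬(a=2∧b=16) →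
      6*b+30*a ≤ 126 + 6*(a*a) := by
    intro a b c h h1 h2
    have ha : a ≤ 9 := by omega
    interval_cases a <;> omega
  exact key _ _ _ hpe h118 h216

lemma inf_rank_one (hP : IsVSPartition 2 P) {M M' : Submodule Kk Vv} (hM : M ∈ P) (hM' : M' ∈ P)
    (h4 : finrank Kk M = 4) (h4' : finrank Kk M' = 4) (hne : M ≠ M') :
    finrank Kk ↥(M ⊓ M') = 1 := by
  have hge := inf_rank_ge M M'
  rw [h4, h4'] at hge
  by_contra hne1
  have h2 : 2 ≤ finrank Kk ↥(M ⊓ M') := by omega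
  have hcard : 1 < (nz (M ⊓ M')).card := by
    rw [nz_card]
    have : 2^2 ≤ 2 ^ finrank Kk ↥(M ⊓ M') := Nat.pow_le_pow_right (by norm_num) h2
    omega
  obtain ⟨y, hy, z, hz, hyz⟩ := Finset.one_lt_card.1 hcard
  simp only [nz, Finset.mem_filter, Finset.mem_univ, true_and, Submodule.mem_inf] at hy hz
  obtain ⟨U, -, hU⟩ := mem_unique hP hy.2 hz.2 hyz
  exact hne ((hU M ⟨hM, hy.1.1, hz.1.1⟩).trans (hU M' ⟨hM', hy.1.2, hz.1.2⟩).symm)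

lemma sum_dim (Q : Finset (Submodule Kk Vv)) (d : ℕ) (hd : ∀ M ∈ Q, finrank Kk M = d) :
    ∑ x ∈ pts, (Q.filter (fun M => x ∈ M)).card = Q.card * (2 ^ d - 1) := by
  rw [sum_card_filter]
  rw [Finset.sum_congr rfl (fun M hM => by rw [nz_card, hd M hM])]
  rw [Finset.sum_const, smul_eq_mul]

lemma sum_sq (hP : IsVSPartition 2 P) (Q : Finset (Submodule Kk Vv)) (hQP : ∀ M ∈ Q, M ∈ P)
    (h4 : ∀ M ∈ Q, finrank Kk M = 4) :
    ∑ x ∈ pts, ((Q.filter (fun M => x ∈ M)).card * (Q.filter (fun M => x ∈ M)).card)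
      = Q.card * 15 + (Q.card * Q.card - Q.card) := by
  have hterm : ∀ x : Vv, (Q.filter (fun M => x ∈ M)).card * (Q.filter (fun M => x ∈ M)).card
      = ∑ p ∈ Q ×ˢ Q, if x ∈ p.1 ∧ x ∈ p.2 then 1 else 0 := by
    intro x
    rw [← Finset.card_product, ← Finset.filter_product, Finset.card_filter]
  rw [Finset.sum_congr rfl (fun x _ => hterm x), Finset.sum_comm]
  have hin : ∀ p ∈ Q ×ˢ Q,
      (∑ x ∈ pts, if x ∈ p.1 ∧ x ∈ p.2 then 1 else 0) = (nz ((p:Submodule Kk Vv × Submodule Kk Vv).1 ⊓ p.2)).card := by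
    intro p _
    rw [← Finset.card_filter]
    congr 1
    ext y
    simp only [pts, nz, Finset.mem_filter, Finset.mem_univ, true_and, Submodule.mem_inf]
    tauto
  rw [Finset.sum_congr rfl hin]
  rw [← Finset.diag_union_offDiag, Finset.sum_union (Finset.disjoint_diag_offDiag _),
    Finset.sum_diag]
  have hdiag : ∀ M ∈ Q, (nz (M ⊓ M)).card = 15 := by
    intro M hM
    rw [inf_idem, nz_card, h4 M hM]
    norm_num
  have hoff : ∀ p ∈ Q.offDiag,
      (nz ((p : Submodule Kk Vv × Submodule Kk Vv).1 ⊓ p.2)).card = 1 := by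
    intro p hp
    rw [Finset.mem_offDiag] at hp
    rw [nz_card, inf_rank_one hP (hQP _ hp.1) (hQP _ hp.2.1) (h4 _ hp.1) (h4 _ hp.2.1) hp.2.2]
    norm_num
  rw [Finset.sum_congr rfl hdiag, Finset.sum_congr rfl hoff, Finset.sum_const, Finset.sum_const,
    smul_eq_mul, smul_eq_mul, Finset.offDiag_card, mul_one]

end PointAnalysis


end VSPAux

/-- If `P` is a vector space `2`-partition of `F_2^7` of type `4^(m_4) 3^(m_3) 2^⋆`,
then `m_3 ≤ 381 − ⌈m_4(61 − m_4)/7⌉`. -/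
theorem upper_bound_m4_m3 (P : Set (Submodule (ZMod 2) (Fin 7 → ZMod 2)))
    (hP : IsVSPartition 2 P)
    (htype : ∀ U ∈ P, finrank (ZMod 2) U = 4 ∨ finrank (ZMod 2) U = 3 ∨
      finrank (ZMod 2) U = 2)
    (m4 m3 : ℕ)
    (hm4 : {U ∈ P | finrank (ZMod 2) U = 4}.ncard = m4)
    (hm3 : {U ∈ P | finrank (ZMod 2) U = 3}.ncard = m3) :
    (m3 : ℤ) ≤ 381 - ⌈((m4 : ℚ) * (61 - (m4 : ℚ))) / 7⌉ := by
  classical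
  have hfin : P.Finite := Set.toFinite P
  set PF : Finset (Submodule VSPAux.Kk VSPAux.Vv) := hfin.toFinset with hPFdef
  have hPF : ∀ M, M ∈ PF ↔ M ∈ P := fun M => hfin.mem_toFinset
  set Q4 : Finset (Submodule VSPAux.Kk VSPAux.Vv) :=
    PF.filter (fun M : Submodule VSPAux.Kk VSPAux.Vv => finrank VSPAux.Kk M = 4) with hQ4def
  set Q3 : Finset (Submodule VSPAux.Kk VSPAux.Vv) :=
    PF.filter (fun M : Submodule VSPAux.Kk VSPAux.Vv => finrank VSPAux.Kk M = 3) with hQ3def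
  have hm4' : Q4.card = m4 := by
    rw [← hm4, ← Set.ncard_coe_finset]
    congr 1
    ext U
    simp only [hQ4def, Finset.coe_filter, Set.mem_setOf_eq, hPF]
  have hm3' : Q3.card = m3 := by
    rw [← hm3, ← Set.ncard_coe_finset]
    congr 1
    ext U
    simp only [hQ3def, Finset.coe_filter, Set.mem_setOf_eq, hPF]
  have hsum4 : ∑ x ∈ VSPAux.pts, (Q4.filter (fun M => x ∈ M)).card = m4 * 15 := by
    rw [VSPAux.sum_dim Q4 4 (fun M hM => (Finset.mem_filter.1 hM).2), hm4']
    norm_num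
  have hsum3 : ∑ x ∈ VSPAux.pts, (Q3.filter (fun M => x ∈ M)).card = m3 * 7 := by
    rw [VSPAux.sum_dim Q3 3 (fun M hM => (Finset.mem_filter.1 hM).2), hm3']
    norm_num
  have hsumsq : ∑ x ∈ VSPAux.pts,
      ((Q4.filter (fun M => x ∈ M)).card * (Q4.filter (fun M => x ∈ M)).card)
      = m4 * 15 + (m4 * m4 - m4) := by
    rw [VSPAux.sum_sq hP Q4 (fun M hM => (hPF M).1 (Finset.mem_filter.1 hM).1)
      (fun M hM => (Finset.mem_filter.1 hM).2), hm4']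
  have hpb : ∀ x ∈ VSPAux.pts,
      6 * (Q3.filter (fun M => x ∈ M)).card + 30 * (Q4.filter (fun M => x ∈ M)).card
      ≤ 126 + 6 * ((Q4.filter (fun M => x ∈ M)).card * (Q4.filter (fun M => x ∈ M)).card) := by
    intro x hxp
    have hx : x ≠ 0 := by
      simp only [VSPAux.pts, Finset.mem_filter] at hxp
      exact hxp.2
    have hb := VSPAux.point_bound hP htype PF hPF hx
    have e4 : Q4.filter (fun M => x ∈ M)
        = (PF.filter (fun M => x ∈ M)).filter
          (fun M : Submodule VSPAux.Kk VSPAux.Vv => finrank VSPAux.Kk M = 4) := by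
      rw [hQ4def]; apply Finset.filter_comm
    have e3 : Q3.filter (fun M => x ∈ M)
        = (PF.filter (fun M => x ∈ M)).filter
          (fun M : Submodule VSPAux.Kk VSPAux.Vv => finrank VSPAux.Kk M = 3) := by
      rw [hQ3def]; apply Finset.filter_comm
    rw [e4, e3]
    exact hb
  have hsums := Finset.sum_le_sum hpb
  rw [Finset.sum_add_distrib, Finset.sum_add_distrib, ← Finset.mul_sum, ← Finset.mul_sum,
    ← Finset.mul_sum, Finset.sum_const, VSPAux.pts_card, hsum3, hsum4, hsumsq] at hsums
  -- hsums : 6 * (m3 * 7) + 30 * (m4 * 15) ≤ 126 • 127?? careful: sum_const gives card • 126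
  rw [smul_eq_mul] at hsums
  have hmm : m4 ≤ m4 * m4 := by nlinarith
  have hq : (42 : ℚ) * m3 + 450 * m4 ≤ 16002 + 90 * m4 + 6 * ((m4 : ℚ) * m4 - m4) := by
    have hcast := (Nat.cast_le (α := ℚ)).2 hsums
    push_cast [Nat.cast_sub hmm] at hcast
    linarith
  have hceil : ⌈((m4 : ℚ) * (61 - (m4 : ℚ))) / 7⌉ ≤ 381 - (m3 : ℤ) := by
    apply Int.ceil_le.2
    push_cast
    rw [div_le_iff₀ (by norm_num : (0:ℚ) < 7)]
    ring_nf
    ring_nf at hq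
    linarith [hq]
  linarith
end

section
/- Let q be a prime power, t ≥ 1, k > t, and let 𝒫 be a non-trivial vector space t-partition of 𝔽_q^v containing no elements of dimension i for any t < i < k. Then the set 𝒩 of t-dimensional elements of 𝒫 is q^{k−t}-divisible, i.e., #𝒩 ≡ #{N ∈ 𝒩 : N ≤ H} (mod q^{k−t}) for every hyperplane H of 𝔽_q^v. -/
open Module

variable {F : Type} [Field F] {v : ℕ}

lemma rank_sup_span {S : Submodule F (Fin v → F)} {x : Fin v → F} (hx : x ∉ S) :
    finrank F ↥(S ⊔ (F ∙ x)) = finrank F S + 1 := by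
  have hx0 : x ≠ 0 := fun h => hx (h ▸ S.zero_mem)
  have h1 : finrank F ↥(F ∙ x) = 1 := finrank_span_singleton hx0
  have hinf : S ⊓ (F ∙ x) = ⊥ := by
    rw [eq_bot_iff]
    rintro y ⟨hyS, hyx⟩
    obtain ⟨c, rfl⟩ := Submodule.mem_span_singleton.1 hyx
    rcases eq_or_ne c 0 with rfl | hc
    · simp
    · exact absurd (by simpa [smul_smul, inv_mul_cancel₀ hc] using S.smul_mem c⁻¹ hyS) hx
  have h2 := Submodule.finrank_sup_add_finrank_inf_eq S (F ∙ x)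
  rw [hinf, h1] at h2
  simp only [finrank_bot] at h2
  omega

lemma inf_hyperplane_rank {A H : Submodule F (Fin v → F)} (hH : finrank F H = v - 1)
    (hA : ¬ A ≤ H) : 1 ≤ v ∧ A ⊔ H = ⊤ ∧ finrank F ↥(A ⊓ H) + 1 = finrank F A := by
  obtain ⟨w, hwA, hwH⟩ := SetLike.not_le_iff_exists.1 hA
  have hv : 1 ≤ v := by
    by_contra h
    interval_cases v
    exact hwH (by simpa using (Subsingleton.elim w 0) ▸ H.zero_mem)
  have htopr : finrank F (Fin v → F) = v := by simp
  have hlt : H < A ⊔ H := lt_of_le_of_ne le_sup_right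
    (fun h => hwH (h ▸ Submodule.mem_sup_left hwA))
  have h1 : finrank F ↥(A ⊔ H) = v := by
    have := Submodule.finrank_lt_finrank_of_lt hlt
    have h2 := Submodule.finrank_le (A ⊔ H)
    rw [htopr] at h2
    omega
  have htop : A ⊔ H = ⊤ := Submodule.eq_top_of_finrank_eq (by rw [h1, htopr])
  have h3 := Submodule.finrank_sup_add_finrank_inf_eq A H
  rw [htop, hH] at h3
  rw [finrank_top, htopr] at h3
  have hA1 : 1 ≤ finrank F A := by
    by_contra h
    have : A = ⊥ := Submodule.finrank_eq_zero.1 (by omega)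
    exact hA (this ▸ bot_le)
  exact ⟨hv, htop, by omega⟩

variable [Fintype F]

lemma card_submodule (W : Submodule F (Fin v → F)) :
    Nat.card W = Fintype.card F ^ finrank F W := by
  have : Fintype W := Fintype.ofFinite _
  rw [Nat.card_eq_fintype_card, card_eq_pow_finrank (K := F)]

lemma keyB (t : ℕ) (ht : 1 ≤ t) (H W : Submodule F (Fin v → F))
    (hH : finrank F H = v - 1) (hW : ¬ W ≤ H) :
    (Fintype.card F) ^ (finrank F W - t) ∣
      {T : Submodule F (Fin v → F) | finrank F T = t ∧ T ≤ W ∧ ¬ T ≤ H}.ncard := by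
  classical
  set q := Fintype.card F with hqdef
  set d := finrank F W with hddef
  by_cases hdt : d ≤ t
  · simpa [Nat.sub_eq_zero_of_le hdt] using one_dvd _
  push_neg at hdt
  obtain ⟨hv, htop, hrk⟩ := inf_hyperplane_rank hH hW
  obtain ⟨w, hwW, hwH⟩ := SetLike.not_le_iff_exists.1 hW
  haveI : Fintype (Submodule F (Fin v → F)) := Fintype.ofFinite _
  set A : Finset (Submodule F (Fin v → F)) :=
    Finset.univ.filter (fun T => finrank F T = t ∧ T ≤ W ∧ ¬ T ≤ H) with hAdef
  set S' : Finset (Submodule F (Fin v → F)) :=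
    Finset.univ.filter (fun S => finrank F S = t - 1 ∧ S ≤ W ⊓ H) with hS'def
  have hncard : {T : Submodule F (Fin v → F) | finrank F T = t ∧ T ≤ W ∧ ¬ T ≤ H}.ncard
      = A.card := by
    rw [Set.ncard_eq_toFinset_card', Set.toFinset_setOf]
  rw [hncard]
  -- step 1: fiber over T ⊓ H
  have hstep1 : A.card = ∑ S ∈ S', (A.filter (fun T => T ⊓ H = S)).card := by
    apply Finset.card_eq_sum_card_fiberwise
    intro T hT
    rw [Finset.mem_coe, hAdef, Finset.mem_filter] at hT
    obtain ⟨-, hTt, hTW, hTH⟩ := hT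
    obtain ⟨-, -, hrkT⟩ := inf_hyperplane_rank hH hTH
    rw [Finset.mem_coe, hS'def, Finset.mem_filter]
    beta_reduce
    exact ⟨Finset.mem_univ _, by omega, inf_le_inf_right H hTW⟩
  -- step 2: each fiber has size q ^ (d - t)
  have hstep2 : ∀ S ∈ S', (A.filter (fun T => T ⊓ H = S)).card = q ^ (d - t) := by
    intro S hS
    rw [hS'def, Finset.mem_filter] at hS
    obtain ⟨-, hSrk, hSWH⟩ := hS
    have hSH : S ≤ H := hSWH.trans inf_le_right
    have hSW : S ≤ W := hSWH.trans inf_le_left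
    set g : (Fin v → F) → Submodule F (Fin v → F) := fun y => S ⊔ (F ∙ (y + w)) with hgdef
    set Wfin : Finset (Fin v → F) := Set.toFinset ((W ⊓ H : Submodule F (Fin v → F)) : Set (Fin v → F)) with hWfin
    have hcardW : Wfin.card = q ^ (d - 1) := by
      rw [hWfin, Set.toFinset_card, ← Nat.card_eq_fintype_card]
      simp only [SetLike.coe_sort_coe]
      rw [card_submodule (W ⊓ H)]
      congr 1
      omega
    have hg : ∀ y ∈ Wfin, g y ∈ A.filter (fun T => T ⊓ H = S) := by
      intro y hy
      rw [hWfin, Set.mem_toFinset] at hy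
      obtain ⟨hyW, hyH⟩ := hy
      have hyw : y + w ∉ H := fun h => hwH (by simpa using H.sub_mem h hyH)
      have hywS : y + w ∉ S := fun h => hyw (hSH h)
      have hywW : y + w ∈ W := W.add_mem hyW hwW
      have hmemg : y + w ∈ g y := Submodule.mem_sup_right (Submodule.mem_span_singleton_self _)
      rw [Finset.mem_filter, hAdef, Finset.mem_filter]
      refine ⟨⟨Finset.mem_univ _, ?_, ?_, fun h => hyw (h hmemg)⟩, ?_⟩
      · rw [hgdef]; rw [rank_sup_span hywS, hSrk]; omega
      · exact sup_le hSW ((Submodule.span_singleton_le_iff_mem _ _).2 hywW)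
      · refine le_antisymm ?_ (le_inf le_sup_left hSH)
        rintro x ⟨hx1, hx2⟩
        obtain ⟨s, hs, z, hz, rfl⟩ := Submodule.mem_sup.1 hx1
        obtain ⟨c, rfl⟩ := Submodule.mem_span_singleton.1 hz
        rcases eq_or_ne c 0 with rfl | hc
        · simpa using hs
        · exfalso
          apply hyw
          have : c • (y + w) ∈ H := by
            have := H.sub_mem hx2 (hSH hs)
            simpa using this
          simpa [smul_smul, inv_mul_cancel₀ hc] using H.smul_mem c⁻¹ this
    have hfibcount : Wfin.card = ∑ T ∈ A.filter (fun T => T ⊓ H = S),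
        (Wfin.filter (fun y => g y = T)).card :=
      Finset.card_eq_sum_card_fiberwise hg
    have hwWH : w ∉ W ⊓ H := fun h => hwH h.2
    have hWdecomp : (W ⊓ H) ⊔ (F ∙ w) = W := by
      apply Submodule.eq_of_le_of_finrank_le
        (sup_le inf_le_left ((Submodule.span_singleton_le_iff_mem _ _).2 hwW))
      rw [rank_sup_span hwWH]
      omega
    have hfib : ∀ T ∈ A.filter (fun T => T ⊓ H = S),
        (Wfin.filter (fun y => g y = T)).card = q ^ (t - 1) := by
      intro T hT
      rw [Finset.mem_filter, hAdef, Finset.mem_filter] at hT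
      obtain ⟨⟨-, hTt, hTW, hTH⟩, hTS⟩ := hT
      have hST : S ≤ T := hTS ▸ inf_le_left
      -- find y0 ∈ W ⊓ H with y0 + w ∈ T
      obtain ⟨u, huT, huH⟩ := SetLike.not_le_iff_exists.1 hTH
      have huW : u ∈ (W ⊓ H) ⊔ (F ∙ w) := by rw [hWdecomp]; exact hTW huT
      obtain ⟨y', hy', z, hz, hu⟩ := Submodule.mem_sup.1 huW
      obtain ⟨c, rfl⟩ := Submodule.mem_span_singleton.1 hz
      have hc : c ≠ 0 := by
        rintro rfl
        apply huH
        rw [← hu]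
        simpa using hy'.2
      have hy0 : c⁻¹ • y' ∈ W ⊓ H := (W ⊓ H).smul_mem _ hy'
      have hy0T : c⁻¹ • y' + w ∈ T := by
        have := T.smul_mem c⁻¹ huT
        rw [← hu] at this
        simpa [smul_add, smul_smul, inv_mul_cancel₀ hc] using this
      set y0 := c⁻¹ • y' with hy0def
      have hfibeq : Wfin.filter (fun y => g y = T)
          = (Set.toFinset (S : Set (Fin v → F))).image (fun s => y0 + s) := by
        ext y
        simp only [Finset.mem_filter, Finset.mem_image, Set.mem_toFinset, hWfin,
          Set.mem_toFinset]
        constructor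
        · rintro ⟨hyWH, hgy⟩
          have hywT : y + w ∈ T := hgy ▸ Submodule.mem_sup_right (Submodule.mem_span_singleton_self _)
          have hdiff : y - y0 ∈ S := by
            rw [← hTS]
            constructor
            · have := T.sub_mem hywT hy0T
              simpa using this
            · exact H.sub_mem hyWH.2 hy0.2
          exact ⟨y - y0, hdiff, by abel⟩
        · rintro ⟨s, hs, rfl⟩
          have hyWH : y0 + s ∈ W ⊓ H := (W ⊓ H).add_mem hy0 (hSWH hs)
          refine ⟨hyWH, ?_⟩
          have hle : g (y0 + s) ≤ T := by
            apply sup_le hST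
            apply (Submodule.span_singleton_le_iff_mem _ _).2
            have : y0 + s + w = (y0 + w) + s := by abel
            rw [this]
            exact T.add_mem hy0T (hST hs)
          have hyw : y0 + s + w ∉ H := fun h => hwH (by
            have := H.sub_mem h hyWH.2
            simpa using this)
          have hywS : y0 + s + w ∉ S := fun h => hyw (hSH h)
          apply Submodule.eq_of_le_of_finrank_le hle
          rw [hgdef]
          simp only
          rw [rank_sup_span hywS, hSrk, hTt]
          omega
      rw [hfibeq, Finset.card_image_of_injective _ (add_right_injective y0),
        Set.toFinset_card, ← Nat.card_eq_fintype_card]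
      simp only [SetLike.coe_sort_coe]
      rw [card_submodule S, hSrk]
    rw [hfibcount, Finset.sum_congr rfl hfib, Finset.sum_const, smul_eq_mul] at hcardW
    have hpow : q ^ (d - 1) = q ^ (d - t) * q ^ (t - 1) := by
      rw [← pow_add]
      congr 1
      omega
    rw [hpow] at hcardW
    have hq1 : 0 < q ^ (t - 1) := pow_pos Fintype.card_pos _
    exact Nat.eq_of_mul_eq_mul_right hq1 hcardW
  rw [hstep1, Finset.sum_congr rfl hstep2, Finset.sum_const, smul_eq_mul]
  exact Dvd.intro _ (mul_comm _ _)


/-- A set `N` of subspaces of `F^v` is `m`-divisible if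
`#N ≡ #{X ∈ N : X ≤ H} (mod m)` for every hyperplane `H` of `F^v`. -/
def IsModDivisible {F : Type} [Field F] {v : ℕ} (m : ℕ)
    (N : Set (Submodule F (Fin v → F))) : Prop :=
  ∀ H : Submodule F (Fin v → F), finrank F H = v - 1 →
    N.ncard ≡ {X ∈ N | X ≤ H}.ncard [MOD m]

/-- The set of `t`-dimensional elements of a non-trivial vector space `t`-partition
whose second smallest occurring dimension is at least `k` is `q^(k−t)`-divisible. -/
theorem holes_divisible (q v t k : ℕ) (ht : 1 ≤ t) (hk : t < k)
    (F : Type) [Field F] [Fintype F] (hq : Fintype.card F = q)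
    (P : Set (Submodule F (Fin v → F))) (hP : IsVSPartition t P)
    (hnt : ¬ ∀ U ∈ P, finrank F U = t ∨ finrank F U = v)
    (hgap : ∀ U ∈ P, ∀ i : ℕ, t < i → i < k → finrank F U ≠ i) :
    IsModDivisible (q ^ (k - t)) {N ∈ P | finrank F N = t} := by
  classical
  intro H hH
  set m := q ^ (k - t) with hmdef
  -- from non-triviality: k < v
  push_neg at hnt
  obtain ⟨U0, hU0P, hU0t, hU0v⟩ := hnt
  have hU0ge : t ≤ finrank F U0 := hP.1 U0 hU0P
  have hU0k : k ≤ finrank F U0 := by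
    by_contra h
    push_neg at h
    exact hgap U0 hU0P _ (lt_of_le_of_ne hU0ge (Ne.symm hU0t)) h rfl
  have hU0le : finrank F U0 ≤ v := by
    have := Submodule.finrank_le U0
    simpa using this
  have hkv : k < v := lt_of_le_of_lt hU0k (lt_of_le_of_ne hU0le hU0v)
  have hHtop : ¬ (⊤ : Submodule F (Fin v → F)) ≤ H := by
    intro h
    have : finrank F (⊤ : Submodule F (Fin v → F)) ≤ finrank F H :=
      Submodule.finrank_mono h
    rw [finrank_top] at this
    simp only [Module.finrank_pi, Fintype.card_fin] at this
    omega
  haveI : Fintype (Submodule F (Fin v → F)) := Fintype.ofFinite _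
  -- the finsets
  set D : Finset (Submodule F (Fin v → F)) :=
    Finset.univ.filter (fun T => finrank F T = t ∧ ¬ T ≤ H) with hDdef
  set Pfin : Finset (Submodule F (Fin v → F)) := Finset.univ.filter (· ∈ P) with hPfin
  -- m divides D.card (apply keyB with W = ⊤)
  have hDdvd : m ∣ D.card := by
    have h1 := keyB t ht H ⊤ hH hHtop
    rw [hq] at h1
    have h2 : {T : Submodule F (Fin v → F) | finrank F T = t ∧ T ≤ ⊤ ∧ ¬ T ≤ H}.ncard
        = D.card := by
      rw [Set.ncard_eq_toFinset_card', Set.toFinset_setOf]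
      congr 1
      ext T
      simp [hDdef]
    rw [h2] at h1
    refine dvd_trans ?_ h1
    apply pow_dvd_pow
    have : finrank F (⊤ : Submodule F (Fin v → F)) = v := by
      rw [finrank_top]; simp
    rw [this]
    omega
  -- fiberwise decomposition of D over P
  set f : Submodule F (Fin v → F) → Submodule F (Fin v → F) :=
    fun T => if h : finrank F T = t then (hP.2 T h).choose else ⊥ with hfdef
  have hfspec : ∀ T : Submodule F (Fin v → F), finrank F T = t →
      (f T ∈ P ∧ T ≤ f T) ∧ ∀ U, U ∈ P ∧ T ≤ U → U = f T := by
    intro T hT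
    have h1 := (hP.2 T hT).choose_spec
    rw [hfdef]
    simp only [dif_pos hT]
    exact ⟨h1.1, h1.2⟩
  have hDsum : D.card = ∑ U ∈ Pfin, (D.filter (fun T => f T = U)).card := by
    apply Finset.card_eq_sum_card_fiberwise
    intro T hT
    rw [Finset.mem_coe, hDdef, Finset.mem_filter] at hT
    rw [Finset.mem_coe, hPfin, Finset.mem_filter]
    exact ⟨Finset.mem_univ _, ((hfspec T hT.2.1).1).1⟩
  have hfiber_eq : ∀ U ∈ Pfin, D.filter (fun T => f T = U)
      = Finset.univ.filter (fun T : Submodule F (Fin v → F) => finrank F T = t ∧ T ≤ U ∧ ¬ T ≤ H) := by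
    intro U hU
    rw [hPfin, Finset.mem_filter] at hU
    ext T
    simp only [hDdef, Finset.mem_filter, Finset.mem_univ, true_and]
    constructor
    · rintro ⟨⟨hTt, hTH⟩, hfT⟩
      exact ⟨hTt, hfT ▸ ((hfspec T hTt).1).2, hTH⟩
    · rintro ⟨hTt, hTU, hTH⟩
      exact ⟨⟨hTt, hTH⟩, ((hfspec T hTt).2 U ⟨hU.2, hTU⟩).symm⟩
  set AU : Submodule F (Fin v → F) → ℕ := fun U =>
    (Finset.univ.filter
      (fun T : Submodule F (Fin v → F) => finrank F T = t ∧ T ≤ U ∧ ¬ T ≤ H)).card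
    with hAUdef
  have hsplit : D.card
      = ∑ U ∈ Pfin.filter (fun U : Submodule F (Fin v → F) => finrank F U = t), AU U
      + ∑ U ∈ Pfin.filter (fun U : Submodule F (Fin v → F) => ¬ finrank F U = t), AU U := by
    rw [hDsum, Finset.sum_congr rfl (fun U hU => by rw [hfiber_eq U hU])]
    exact (Finset.sum_filter_add_sum_filter_not _ _ _).symm
  have hdvd2 : m ∣ ∑ U ∈ Pfin.filter (fun U : Submodule F (Fin v → F) => ¬ finrank F U = t), AU U := by
    apply Finset.dvd_sum
    intro U hU
    rw [Finset.mem_filter, hPfin, Finset.mem_filter] at hU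
    obtain ⟨⟨-, hUP⟩, hUt⟩ := hU
    have hUk : k ≤ finrank F U := by
      have h1 : t ≤ finrank F U := hP.1 U hUP
      by_contra h
      push_neg at h
      exact hgap U hUP _ (lt_of_le_of_ne h1 (Ne.symm hUt)) h rfl
    by_cases hUH : U ≤ H
    · have hz : AU U = 0 := by
        rw [hAUdef]
        simp only [Finset.card_eq_zero]
        ext T
        simp only [Finset.mem_filter, Finset.mem_univ, true_and, Finset.notMem_empty,
          iff_false, not_and]
        intro _ hTU hTH
        exact hTH (hTU.trans hUH)
      rw [hz]
      exact dvd_zero m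
    · have h1 := keyB t ht H U hH hUH
      rw [hq] at h1
      have h2 : {T : Submodule F (Fin v → F) | finrank F T = t ∧ T ≤ U ∧ ¬ T ≤ H}.ncard
          = AU U := by
        rw [Set.ncard_eq_toFinset_card', Set.toFinset_setOf]
      rw [h2] at h1
      exact dvd_trans (pow_dvd_pow q (by omega)) h1
  have h1sum : ∑ U ∈ Pfin.filter (fun U : Submodule F (Fin v → F) => finrank F U = t), AU U
      = ((Pfin.filter (fun U : Submodule F (Fin v → F) => finrank F U = t)).filter (fun U : Submodule F (Fin v → F) => ¬ U ≤ H)).card := by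
    rw [Finset.card_filter]
    apply Finset.sum_congr rfl
    intro U hU
    rw [Finset.mem_filter] at hU
    obtain ⟨-, hUt⟩ := hU
    by_cases hUH : U ≤ H
    · rw [if_neg (by simpa using hUH), hAUdef]
      simp only [Finset.card_eq_zero]
      ext T
      simp only [Finset.mem_filter, Finset.mem_univ, true_and, Finset.notMem_empty,
        iff_false, not_and]
      intro _ hTU hTH
      exact hTH (hTU.trans hUH)
    · rw [if_pos (by simpa using hUH)]
      simp only [hAUdef]
      have hsingle : Finset.univ.filter
          (fun T : Submodule F (Fin v → F) => finrank F T = t ∧ T ≤ U ∧ ¬ T ≤ H) = {U} := by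
        ext T
        simp only [Finset.mem_filter, Finset.mem_univ, true_and, Finset.mem_singleton]
        constructor
        · rintro ⟨hTt, hTU, -⟩
          exact Submodule.eq_of_le_of_finrank_le hTU (by omega)
        · rintro rfl
          exact ⟨hUt, le_rfl, hUH⟩
      rw [hsingle, Finset.card_singleton]
  have hdvd1 : m ∣ ((Pfin.filter (fun U : Submodule F (Fin v → F) => finrank F U = t)).filter (fun U : Submodule F (Fin v → F) => ¬ U ≤ H)).card := by
    rw [← h1sum]
    rw [hsplit] at hDdvd
    exact (Nat.dvd_add_iff_left hdvd2).2 hDdvd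
  -- final conversion
  have e1 : {N ∈ P | finrank F N = t}.ncard
      = (Pfin.filter (fun U : Submodule F (Fin v → F) => finrank F U = t)).card := by
    rw [Set.ncard_eq_toFinset_card', Set.toFinset_setOf]
    congr 1
    ext U
    simp [hPfin, Finset.filter_filter]
  have e2 : {X ∈ {N ∈ P | finrank F N = t} | X ≤ H}.ncard
      = ((Pfin.filter (fun U : Submodule F (Fin v → F) => finrank F U = t)).filter (fun U : Submodule F (Fin v → F) => U ≤ H)).card := by
    rw [Set.ncard_eq_toFinset_card', Set.toFinset_setOf]
    congr 1
    ext U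
    simp only [Set.mem_setOf_eq, Finset.mem_filter, Finset.mem_univ, true_and, hPfin]
  have e3 : (Pfin.filter (fun U : Submodule F (Fin v → F) => finrank F U = t)).card
      = ((Pfin.filter (fun U : Submodule F (Fin v → F) => finrank F U = t)).filter (fun U : Submodule F (Fin v → F) => U ≤ H)).card
      + ((Pfin.filter (fun U : Submodule F (Fin v → F) => finrank F U = t)).filter (fun U : Submodule F (Fin v → F) => ¬ U ≤ H)).card :=
    (Finset.card_filter_add_card_filter_not _).symm
  rw [e1, e2, e3]
  exact ((Nat.modEq_iff_dvd' (Nat.le_add_right _ _)).2 (by simpa using hdvd1)).symm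
end

section
/- Let q be a prime power, t ≥ 1, r ≥ 1, and let 𝒩 be a non-empty q^r-divisible set of t-dimensional subspaces of 𝔽_q^v with n = #𝒩. Then there exists a hyperplane H of 𝔽_q^v with #{N ∈ 𝒩 : N ≤ H} < n/q^t. -/
open Module

/-- For a non-empty `q^r`-divisible set `N` of `t`-subspaces of `F_q^v` there exists a
hyperplane `H` with `#{X ∈ N : X ≤ H} < #N / q^t`. -/
theorem exists_light_hyperplane (q v t r : ℕ) (ht : 1 ≤ t) (hr : 1 ≤ r)
    (F : Type) [Field F] [Fintype F] (hq : Fintype.card F = q)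
    (N : Set (Submodule F (Fin v → F)))
    (hNt : ∀ X ∈ N, finrank F X = t)
    (hdiv : IsModDivisible (q ^ r) N)
    (hne : N.Nonempty) :
    ∃ H : Submodule F (Fin v → F), finrank F H = v - 1 ∧
      ({X ∈ N | X ≤ H}.ncard : ℚ) < (N.ncard : ℚ) / (q : ℚ) ^ t := by
  classical
  by_contra hcon
  push_neg at hcon
  haveI : Finite (Module.Dual F (Fin v → F)) :=
    Finite.of_injective (fun f => (f : (Fin v → F) → F)) DFunLike.coe_injective
  haveI : Fintype (Module.Dual F (Fin v → F)) := Fintype.ofFinite _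
  have hNfin : N.Finite := Set.toFinite N
  set Nf := hNfin.toFinset with hNfdef
  set n := N.ncard with hn
  have hncard : Nf.card = n := (Set.ncard_eq_toFinset_card N hNfin).symm
  have hnpos : 0 < n := (Set.ncard_pos hNfin).mpr hne
  obtain ⟨X0, hX0⟩ := hne
  have htv : t ≤ v := by
    have h1 := Submodule.finrank_le X0
    rw [hNt X0 hX0, Module.finrank_fin_fun] at h1
    exact h1
  have hq2 : 2 ≤ q := hq ▸ Fintype.one_lt_card
  -- per-X count of functionals vanishing on X
  have hcount : ∀ X ∈ Nf,
      (Finset.univ.filter (fun φ : Module.Dual F (Fin v → F) => X ≤ LinearMap.ker φ)).card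
        = q ^ (v - t) := by
    intro X hX
    have hXN : X ∈ N := hNfin.mem_toFinset.mp hX
    have hiff : ∀ φ : Module.Dual F (Fin v → F),
        X ≤ LinearMap.ker φ ↔ φ ∈ X.dualAnnihilator := by
      intro φ
      simp [Submodule.mem_dualAnnihilator, SetLike.le_def, LinearMap.mem_ker]
    have h1 : (Finset.univ.filter (fun φ : Module.Dual F (Fin v → F) => X ≤ LinearMap.ker φ)).card
        = Fintype.card {φ : Module.Dual F (Fin v → F) // X ≤ LinearMap.ker φ} :=
      (Fintype.card_subtype _).symm
    have h2 : Fintype.card {φ : Module.Dual F (Fin v → F) // X ≤ LinearMap.ker φ}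
        = Fintype.card X.dualAnnihilator :=
      Fintype.card_congr (Equiv.subtypeEquivRight hiff)
    have h3 : finrank F X.dualAnnihilator = v - t := by
      have e : finrank F ((Fin v → F) ⧸ X) = finrank F X.dualAnnihilator :=
        LinearEquiv.finrank_eq (Subspace.quotEquivAnnihilator X)
      have h4 := Submodule.finrank_quotient_add_finrank X
      rw [Module.finrank_fin_fun, hNt X hXN] at h4
      omega
    have h5 : Fintype.card X.dualAnnihilator = q ^ (v - t) := by
      rw [card_eq_pow_finrank (K := F) (V := X.dualAnnihilator), hq, h3]
    rw [h1, h2, h5]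
  -- the double count
  have hsum : ∑ φ : Module.Dual F (Fin v → F),
      (Nf.filter (fun X => X ≤ LinearMap.ker φ)).card = n * q ^ (v - t) := by
    calc ∑ φ : Module.Dual F (Fin v → F), (Nf.filter (fun X => X ≤ LinearMap.ker φ)).card
        = ∑ φ : Module.Dual F (Fin v → F), ∑ X ∈ Nf,
            if X ≤ LinearMap.ker φ then 1 else 0 :=
          Finset.sum_congr rfl fun φ _ => Finset.card_filter _ _
      _ = ∑ X ∈ Nf, ∑ φ : Module.Dual F (Fin v → F),
            if X ≤ LinearMap.ker φ then 1 else 0 := Finset.sum_comm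
      _ = ∑ X ∈ Nf,
            (Finset.univ.filter (fun φ : Module.Dual F (Fin v → F) => X ≤ LinearMap.ker φ)).card :=
          Finset.sum_congr rfl fun X _ => (Finset.card_filter _ _).symm
      _ = ∑ _X ∈ Nf, q ^ (v - t) := Finset.sum_congr rfl hcount
      _ = n * q ^ (v - t) := by rw [Finset.sum_const, hncard, smul_eq_mul]
  -- zero functional term
  have hzero : (Nf.filter (fun X => X ≤ LinearMap.ker (0 : Module.Dual F (Fin v → F)))).card = n := by
    rw [LinearMap.ker_zero]
    rw [Finset.filter_true_of_mem (fun X _ => le_top), hncard]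
  have hsplit : ∑ φ ∈ Finset.univ.erase (0 : Module.Dual F (Fin v → F)),
      (Nf.filter (fun X => X ≤ LinearMap.ker φ)).card + n = n * q ^ (v - t) := by
    have h := Finset.sum_erase_add Finset.univ
      (fun φ : Module.Dual F (Fin v → F) => (Nf.filter (fun X => X ≤ LinearMap.ker φ)).card)
      (Finset.mem_univ 0)
    rw [hzero, hsum] at h
    exact h
  -- kernels of nonzero functionals are hyperplanes
  have hker : ∀ φ : Module.Dual F (Fin v → F), φ ≠ 0 →
      finrank F (LinearMap.ker φ) = v - 1 := by
    intro φ hφ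
    have h1 : finrank F (LinearMap.range φ) = 1 := by
      rcases eq_bot_or_eq_top (LinearMap.range φ) with h | h
      · exact absurd (LinearMap.range_eq_bot.mp h) hφ
      · rw [h, finrank_top, finrank_self]
    have h2 := LinearMap.finrank_range_add_finrank_ker φ
    rw [Module.finrank_fin_fun] at h2
    omega
  -- each hyperplane term is bounded below
  have hlow : ∀ φ ∈ Finset.univ.erase (0 : Module.Dual F (Fin v → F)),
      (n : ℚ) / (q : ℚ) ^ t ≤ ((Nf.filter (fun X => X ≤ LinearMap.ker φ)).card : ℚ) := by
    intro φ hφ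
    have hφ0 : φ ≠ 0 := (Finset.mem_erase.mp hφ).1
    have := hcon (LinearMap.ker φ) (hker φ hφ0)
    have hset : {X ∈ N | X ≤ LinearMap.ker φ}.ncard
        = (Nf.filter (fun X => X ≤ LinearMap.ker φ)).card := by
      rw [← Set.ncard_coe_finset]
      congr 1
      ext X
      simp [hNfdef, Set.Finite.mem_toFinset]
    rw [hset] at this
    exact this
  -- sum the lower bounds
  have hbound : ((Finset.univ.erase (0 : Module.Dual F (Fin v → F))).card : ℚ)
      * ((n : ℚ) / (q : ℚ) ^ t)
      ≤ ∑ φ ∈ Finset.univ.erase (0 : Module.Dual F (Fin v → F)),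
          ((Nf.filter (fun X => X ≤ LinearMap.ker φ)).card : ℚ) := by
    have := Finset.card_nsmul_le_sum _ _ _ hlow
    rwa [nsmul_eq_mul] at this
  -- card of nonzero functionals
  have hcardD : Fintype.card (Module.Dual F (Fin v → F)) = q ^ v := by
    rw [card_eq_pow_finrank (K := F), hq, Subspace.dual_finrank_eq, Module.finrank_fin_fun]
  have hcarde : (Finset.univ.erase (0 : Module.Dual F (Fin v → F))).card = q ^ v - 1 := by
    rw [Finset.card_erase_of_mem (Finset.mem_univ 0), Finset.card_univ, hcardD]
  -- assemble over ℚ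
  have hqv1 : 1 ≤ q ^ v := Nat.one_le_pow _ _ (by omega)
  have hsumQ : ∑ φ ∈ Finset.univ.erase (0 : Module.Dual F (Fin v → F)),
      ((Nf.filter (fun X => X ≤ LinearMap.ker φ)).card : ℚ)
      = (n : ℚ) * (q : ℚ) ^ (v - t) - (n : ℚ) := by
    have := congrArg (fun k : ℕ => (k : ℚ)) hsplit
    push_cast at this
    linarith
  have hcardeQ : ((Finset.univ.erase (0 : Module.Dual F (Fin v → F))).card : ℚ)
      = (q : ℚ) ^ v - 1 := by
    rw [hcarde]
    push_cast [hqv1]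
    ring
  rw [hsumQ, hcardeQ] at hbound
  -- final arithmetic contradiction
  have hQ2 : (2 : ℚ) ≤ (q : ℚ) := by exact_mod_cast hq2
  have hQt : (2 : ℚ) ≤ (q : ℚ) ^ t := by
    calc (2 : ℚ) ≤ (q : ℚ) := hQ2
      _ = (q : ℚ) ^ 1 := (pow_one _).symm
      _ ≤ (q : ℚ) ^ t := pow_le_pow_right₀ (by linarith) ht
  have hQt0 : (0 : ℚ) < (q : ℚ) ^ t := by linarith
  have hn1 : (1 : ℚ) ≤ (n : ℚ) := by exact_mod_cast hnpos
  have hpow : (q : ℚ) ^ t * (q : ℚ) ^ (v - t) = (q : ℚ) ^ v := by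
    rw [← pow_add]
    congr 1
    omega
  rw [mul_div_assoc'] at hbound
  rw [div_le_iff₀ hQt0] at hbound
  nlinarith [hbound, hpow, hn1, hQt, hQt0]
end

section
/- Let q be a prime power, t, r ≥ 1, and let 𝒩 be a q^r-divisible set of t-dimensional subspaces of 𝔽_q^v such that q^r divides #𝒩. Then for each natural number s there exists a q^r-divisible set 𝒩' of (t+s)-dimensional subspaces of 𝔽_q^{v+s} with #𝒩' = #𝒩. -/
set_option maxHeartbeats 1000000


open Module

/-- The product of two submodules is linearly equivalent to the product of
the corresponding modules. -/
def prodSubmoduleEquiv {R M M₂ : Type*} [Ring R] [AddCommGroup M] [AddCommGroup M₂]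
    [Module R M] [Module R M₂] (p : Submodule R M) (q : Submodule R M₂) :
    (p.prod q) ≃ₗ[R] p × q where
  toFun x := (⟨x.1.1, x.2.1⟩, ⟨x.1.2, x.2.2⟩)
  invFun y := ⟨(y.1.1, y.2.1), ⟨y.1.2, y.2.2⟩⟩
  left_inv _ := rfl
  right_inv _ := rfl
  map_add' _ _ := rfl
  map_smul' _ _ := rfl

theorem finrank_prod_submodule {K M M₂ : Type*} [Field K] [AddCommGroup M] [AddCommGroup M₂]
    [Module K M] [Module K M₂] [FiniteDimensional K M] [FiniteDimensional K M₂]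
    (p : Submodule K M) (q : Submodule K M₂) :
    finrank K (p.prod q) = finrank K p + finrank K q := by
  rw [LinearEquiv.finrank_eq (prodSubmoduleEquiv p q), Module.finrank_prod]

/-- If `N` is a `q^r`-divisible set of `t`-subspaces of `F_q^v` whose cardinality is
divisible by `q^r`, then for each `s` there is a `q^r`-divisible set of
`(t+s)`-subspaces of `F_q^(v+s)` of the same cardinality. -/
theorem lift_divisible_set (q v t r s : ℕ) (ht : 1 ≤ t) (hr : 1 ≤ r)
    (F : Type) [Field F] [Fintype F] (hq : Fintype.card F = q)
    (N : Set (Submodule F (Fin v → F)))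
    (hNt : ∀ X ∈ N, finrank F X = t)
    (hdiv : IsModDivisible (q ^ r) N)
    (hdvd : q ^ r ∣ N.ncard) :
    ∃ N' : Set (Submodule F (Fin (v + s) → F)),
      (∀ X ∈ N', finrank F X = t + s) ∧
      IsModDivisible (q ^ r) N' ∧
      N'.ncard = N.ncard := by
  classical
  set e : ((Fin v → F) × (Fin s → F)) ≃ₗ[F] (Fin (v + s) → F) :=
    (LinearEquiv.sumArrowLequivProdArrow (Fin v) (Fin s) F F).symm.trans
      (LinearEquiv.funCongrLeft F F finSumFinEquiv.symm) with he
  set f : ((Fin v → F) × (Fin s → F)) →ₗ[F] (Fin (v + s) → F) := e.toLinearMap with hf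
  set φ : Submodule F (Fin v → F) → Submodule F (Fin (v + s) → F) :=
    fun X => (X.prod ⊤).map f with hφ
  have hφinj : Function.Injective φ := by
    intro X Y h
    have h2 : X.prod (⊤ : Submodule F (Fin s → F)) = Y.prod ⊤ :=
      Submodule.map_injective_of_injective e.injective h
    have h3 := congrArg (Submodule.comap (LinearMap.inl F (Fin v → F) (Fin s → F))) h2
    rwa [Submodule.prod_comap_inl, Submodule.prod_comap_inl] at h3
  have hle : ∀ X (H : Submodule F (Fin (v + s) → F)),
      φ X ≤ H ↔ X.prod (⊤ : Submodule F (Fin s → F)) ≤ H.comap f := by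
    intro X H
    exact Submodule.map_le_iff_le_comap
  refine ⟨φ '' N, ?_, ?_, Set.ncard_image_of_injective N hφinj⟩
  · rintro Y ⟨X, hX, rfl⟩
    show finrank F ((X.prod ⊤).map f) = t + s
    rw [hf, LinearEquiv.finrank_map_eq, finrank_prod_submodule, hNt X hX, finrank_top,
      Module.finrank_fin_fun]
  · intro H hH
    set H₀ : Submodule F ((Fin v → F) × (Fin s → F)) := H.comap f with hH₀def
    have hH₀rank : finrank F H₀ = v + s - 1 := by
      rw [hH₀def, hf, Submodule.comap_equiv_eq_map_symm, LinearEquiv.finrank_map_eq, hH]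
    set S : Submodule F ((Fin v → F) × (Fin s → F)) :=
      (⊥ : Submodule F (Fin v → F)).prod ⊤ with hSdef
    by_cases hS : S ≤ H₀
    · -- the hyperplane contains `0 × F^s`; it corresponds to a hyperplane of `F^v`
      set H₁ : Submodule F (Fin v → F) := H₀.comap (LinearMap.inl F _ _) with hH₁def
      have h0y : ∀ y : Fin s → F, ((0 : Fin v → F), y) ∈ H₀ := by
        intro y
        exact hS (by simp [hSdef, Submodule.mem_prod])
      have hdecomp : H₀ = H₁.prod ⊤ := by
        ext ⟨x, y⟩
        simp only [Submodule.mem_prod, Submodule.mem_top, and_true, Submodule.mem_comap,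
          LinearMap.inl_apply, hH₁def]
        constructor
        · intro h
          have := H₀.sub_mem h (h0y y)
          simpa using this
        · intro h
          have := H₀.add_mem h (h0y y)
          simpa using this
      have hH₁rank : finrank F H₁ = v - 1 := by
        have hrk : finrank F H₀ = finrank F H₁ + s := by
          rw [hdecomp, finrank_prod_submodule, finrank_top, Module.finrank_fin_fun]
        rcases Nat.eq_zero_or_pos v with hv | hv
        · have : finrank F H₁ ≤ finrank F (Fin v → F) := Submodule.finrank_le H₁
          rw [Module.finrank_fin_fun] at this
          omega
        · omega
      have hXle : ∀ X : Submodule F (Fin v → F), φ X ≤ H ↔ X ≤ H₁ := by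
        intro X
        rw [hle X H, ← hH₀def, hdecomp]
        constructor
        · intro h x hx
          have : ((x, (0 : Fin s → F))) ∈ H₁.prod ⊤ := h (by simp [Submodule.mem_prod, hx])
          exact this.1
        · rintro h ⟨x, y⟩ ⟨hx, -⟩
          exact ⟨h hx, trivial⟩
      have himg : {Y ∈ φ '' N | Y ≤ H} = φ '' {X ∈ N | X ≤ H₁} := by
        ext Y
        constructor
        · rintro ⟨⟨X, hX, rfl⟩, hY⟩
          exact ⟨X, ⟨hX, (hXle X).mp hY⟩, rfl⟩
        · rintro ⟨X, ⟨hX, hXH⟩, rfl⟩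
          exact ⟨⟨X, hX, rfl⟩, (hXle X).mpr hXH⟩
      rw [himg, Set.ncard_image_of_injective N hφinj,
        Set.ncard_image_of_injective _ hφinj]
      exact hdiv H₁ hH₁rank
    · -- the hyperplane does not contain `0 × F^s`; no lifted subspace lies in it
      have hempty : {Y ∈ φ '' N | Y ≤ H} = ∅ := by
        ext Y
        simp only [Set.mem_sep_iff, Set.mem_empty_iff_false, iff_false, not_and]
        rintro ⟨X, hX, rfl⟩ hY
        apply hS
        refine le_trans ?_ ((hle X H).mp hY)
        rintro ⟨x, y⟩ ⟨hx, -⟩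
        have : x = 0 := hx
        subst this
        exact ⟨X.zero_mem, trivial⟩
      rw [hempty, Set.ncard_empty, Set.ncard_image_of_injective N hφinj]
      exact Nat.modEq_zero_iff_dvd.mpr hdvd
end

section
/- Let q be a prime power, t ≥ 2 and r ≥ 1 integers, and let 𝒩 be a non-empty q^r-divisible set of t-dimensional subspaces of 𝔽_q^v that is not contained in any hyperplane of 𝔽_q^v. If q^r divides #𝒩, then #𝒩 ≥ q^{r+1}. -/
open Module

/-- Number of nonzero linear functionals vanishing on a subspace `U` of `F^v`. -/
lemma count_ann {F : Type} [Field F] [Fintype F] {v : ℕ} (U : Submodule F (Fin v → F)) :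
    {φ : Module.Dual F (Fin v → F) | φ ≠ 0 ∧ U ≤ LinearMap.ker φ}.ncard
      = Fintype.card F ^ (v - finrank F U) - 1 := by
  classical
  haveI : Finite (Module.Dual F (Fin v → F)) :=
    Finite.of_injective (fun φ => (φ : (Fin v → F) → F)) DFunLike.coe_injective
  have hset : {φ : Module.Dual F (Fin v → F) | φ ≠ 0 ∧ U ≤ LinearMap.ker φ}
      = (U.dualAnnihilator : Set (Module.Dual F (Fin v → F))) \ {0} := by
    ext φ
    simp only [Set.mem_setOf_eq, Set.mem_diff, SetLike.mem_coe, Set.mem_singleton_iff,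
      Submodule.mem_dualAnnihilator]
    constructor
    · rintro ⟨h0, hle⟩
      exact ⟨fun w hw => hle hw, h0⟩
    · rintro ⟨hann, h0⟩
      exact ⟨h0, fun w hw => hann w hw⟩
  have hcard : (U.dualAnnihilator : Set (Module.Dual F (Fin v → F))).ncard
      = Fintype.card F ^ (v - finrank F U) := by
    have h1 : finrank F (Fin v → F) = v := Module.finrank_fin_fun F
    have h2 : finrank F ((Fin v → F) ⧸ U) = finrank F U.dualAnnihilator :=
      LinearEquiv.finrank_eq (Subspace.quotEquivAnnihilator U)
    have h3 := Submodule.finrank_quotient_add_finrank U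
    have h5 : finrank F U.dualAnnihilator = v - finrank F U := by omega
    haveI : Fintype U.dualAnnihilator := Fintype.ofFinite _
    have h4 : Fintype.card U.dualAnnihilator = Fintype.card F ^ finrank F U.dualAnnihilator :=
      Module.card_eq_pow_finrank (K := F) (V := ↥U.dualAnnihilator)
    rw [← h5, ← h4, ← Nat.card_coe_set_eq, Nat.card_eq_fintype_card]
    exact Fintype.card_congr (Equiv.refl _)
  rw [hset, Set.ncard_diff_singleton_of_mem
    (Submodule.zero_mem _ : (0 : Module.Dual F (Fin v → F)) ∈ U.dualAnnihilator), hcard]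

/-- The kernel of a nonzero functional is a hyperplane. -/
lemma ker_finrank {F : Type} [Field F] {v : ℕ} (φ : Module.Dual F (Fin v → F)) (h0 : φ ≠ 0) :
    finrank F (LinearMap.ker φ) = v - 1 := by
  have h1 : finrank F (Fin v → F) = v := Module.finrank_fin_fun F
  have h2 := LinearMap.finrank_range_add_finrank_ker φ
  have h3 : finrank F (LinearMap.range φ) = 1 := by
    have hle : finrank F (LinearMap.range φ) ≤ 1 := by
      have := Submodule.finrank_le (LinearMap.range φ)
      simpa using this
    have hne : LinearMap.range φ ≠ ⊥ := by
      simpa [LinearMap.range_eq_bot] using h0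
    have hpos : 0 < finrank F (LinearMap.range φ) := by
      rw [Module.finrank_pos_iff_exists_ne_zero]
      obtain ⟨x, hx⟩ := Submodule.exists_mem_ne_zero_of_ne_bot hne
      exact ⟨⟨x, hx.1⟩, by simpa using hx.2⟩
    omega
  omega

/-- Final arithmetic step. -/
lemma arith_final {q r e n : ℕ} (hq : 2 ≤ q) (hr : 1 ≤ r) (he : 1 ≤ e) (hn : 1 ≤ n)
    (hineq : (q ^ e - 1) * q ^ r ≤ (q ^ e - 1) + (n - 1) * (q ^ (e - 1) - 1))
    (hdvd : q ^ r ∣ n) : q ^ (r + 1) ≤ n := by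
  set P := q ^ r with hP
  have hPq : q ≤ P := Nat.le_self_pow (by omega) q
  have hP2 : 2 ≤ P := le_trans hq hPq
  rcases Nat.lt_or_ge e 2 with he1 | he2
  · -- e = 1 : contradiction
    have : e = 1 := by omega
    subst this
    simp only [pow_one, Nat.sub_self, pow_zero, Nat.mul_zero, Nat.add_zero] at hineq
    have h2 : (q - 1) * 2 ≤ (q - 1) * P := Nat.mul_le_mul_left _ hP2
    omega
  · set A := q ^ (e - 1) with hA
    have hAq : q ≤ A := Nat.le_self_pow (by omega) q
    have hqe : q ^ e = q * A := by
      rw [hA, ← pow_succ']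
      congr 1
      omega
    rw [hqe] at hineq
    -- first: n ≥ (P-1)*q + 2
    have key : (P - 1) * q + 2 ≤ n := by
      by_contra hcon
      push_neg at hcon
      have hn1 : n - 1 ≤ (P - 1) * q := by omega
      have h2 : (n - 1) * (A - 1) ≤ (P - 1) * q * (A - 1) :=
        Nat.mul_le_mul_right _ hn1
      have h3 : (q * A - 1) * P ≤ (q * A - 1) + (P - 1) * q * (A - 1) := le_trans hineq (by omega)
      zify [show 1 ≤ q * A by nlinarith, show 1 ≤ P by omega, show 1 ≤ A by omega] at h3
      have hPz : (2 : ℤ) ≤ (P : ℤ) := by exact_mod_cast hP2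
      have hqz : (2 : ℤ) ≤ (q : ℤ) := by exact_mod_cast hq
      have hAz : (2 : ℤ) ≤ (A : ℤ) := by exact_mod_cast le_trans hq hAq
      nlinarith [mul_pos (by linarith : (0:ℤ) < (q:ℤ)) (by linarith : (0:ℤ) < (A:ℤ))]
    -- then use divisibility
    obtain ⟨k, hk⟩ := hdvd
    have hPpos : 0 < P := by omega
    have hkq : q ≤ k := by
      by_contra hkq
      push_neg at hkq
      have hk1 : k ≤ q - 1 := by omega
      have : n ≤ P * (q - 1) := by
        rw [hk]
        exact Nat.mul_le_mul_left _ hk1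
      have e1 : P * (q - 1) + P = P * q := by
        have : q - 1 + 1 = q := by omega
        rw [← Nat.mul_succ]
        rw [Nat.succ_eq_add_one, this]
      have e2 : (P - 1) * q + q = P * q := by
        have : P - 1 + 1 = P := by omega
        rw [← Nat.succ_mul, Nat.succ_eq_add_one, this]
      omega
    calc q ^ (r + 1) = P * q := by rw [pow_succ]
    _ ≤ P * k := Nat.mul_le_mul_left _ hkq
    _ = n := hk.symm

/-- Theorem (minimum cardinality, part (i)): a non-empty `q^r`-divisible set `N` of
`t`-subspaces (`t ≥ 2`, `r ≥ 1`) not contained in any hyperplane, whose cardinality is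
divisible by `q^r`, satisfies `#N ≥ q^(r+1)`. -/
theorem min_card_divisible_case (q v t r : ℕ) (ht : 2 ≤ t) (hr : 1 ≤ r)
    (F : Type) [Field F] [Fintype F] (hq : Fintype.card F = q)
    (N : Set (Submodule F (Fin v → F)))
    (hNt : ∀ X ∈ N, finrank F X = t)
    (hdiv : IsModDivisible (q ^ r) N)
    (hne : N.Nonempty)
    (hspan : ¬ ∃ H : Submodule F (Fin v → F), finrank F H = v - 1 ∧ ∀ X ∈ N, X ≤ H)
    (hdvd : q ^ r ∣ N.ncard) :
    q ^ (r + 1) ≤ N.ncard := by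
  classical
  have hq2 : 2 ≤ q := by rw [← hq]; exact Fintype.one_lt_card
  obtain ⟨X0, hX0⟩ := hne
  have ht0 : finrank F X0 = t := hNt X0 hX0
  have hV : finrank F (Fin v → F) = v := Module.finrank_fin_fun F
  have htv : t ≤ v := by
    have := Submodule.finrank_le X0
    omega
  have hNfin : N.Finite := Set.toFinite N
  set Nf := hNfin.toFinset with hNfdef
  have hmemNf : ∀ X, X ∈ Nf ↔ X ∈ N := fun X => hNfin.mem_toFinset
  have hn : N.ncard = Nf.card := Set.ncard_eq_toFinset_card N hNfin
  have hX0Nf : X0 ∈ Nf := (hmemNf X0).mpr hX0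
  have hnpos : 1 ≤ Nf.card := Finset.card_pos.mpr ⟨X0, hX0Nf⟩
  -- degenerate case v = t
  rcases Nat.eq_or_lt_of_le htv with hvt | htv'
  · exfalso
    have htop : ∀ X ∈ N, X = ⊤ := fun X hX =>
      Submodule.eq_top_of_finrank_eq (by rw [hNt X hX, hV, ← hvt])
    have hNeq : N = {⊤} := by
      apply Set.eq_singleton_iff_nonempty_unique_mem.mpr
      exact ⟨⟨X0, hX0⟩, htop⟩
    rw [hNeq, Set.ncard_singleton] at hdvd
    have hq1 : q ^ r = 1 := Nat.dvd_one.mp hdvd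
    have : q ≤ q ^ r := Nat.le_self_pow (by omega) q
    omega
  -- main case t < v
  haveI : Finite (Module.Dual F (Fin v → F)) :=
    Finite.of_injective (fun φ => (φ : (Fin v → F) → F)) DFunLike.coe_injective
  haveI : Fintype (Module.Dual F (Fin v → F)) := Fintype.ofFinite _
  have hfilter_card : ∀ U : Submodule F (Fin v → F),
      (Finset.univ.filter
        (fun φ : Module.Dual F (Fin v → F) => φ ≠ 0 ∧ U ≤ LinearMap.ker φ)).card
        = q ^ (v - finrank F U) - 1 := by
    intro U
    rw [← hq, ← count_ann U, ← Set.ncard_coe_finset]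
    congr 1
    ext φ
    simp
  set Φ : Finset (Module.Dual F (Fin v → F)) :=
    Finset.univ.filter (fun φ => φ ≠ 0 ∧ X0 ≤ LinearMap.ker φ) with hΦdef
  -- lower bound for each hyperplane count
  have hm : ∀ φ ∈ Φ, q ^ r ≤ (Nf.filter (fun Y => Y ≤ LinearMap.ker φ)).card := by
    intro φ hφ
    rw [hΦdef, Finset.mem_filter] at hφ
    obtain ⟨-, h0, hle⟩ := hφ
    have hker := ker_finrank φ h0
    have hmod := hdiv (LinearMap.ker φ) hker
    have hset : {X ∈ N | X ≤ LinearMap.ker φ}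
        = ↑(Nf.filter (fun Y => Y ≤ LinearMap.ker φ)) := by
      ext X
      simp [hmemNf X]
    rw [hset, Set.ncard_coe_finset] at hmod
    have hdd : q ^ r ∣ (Nf.filter (fun Y => Y ≤ LinearMap.ker φ)).card := by
      exact (Nat.modEq_zero_iff_dvd).mp ((hmod.symm).trans (Nat.modEq_zero_iff_dvd.mpr hdvd))
    have hpos : 0 < (Nf.filter (fun Y => Y ≤ LinearMap.ker φ)).card :=
      Finset.card_pos.mpr ⟨X0, Finset.mem_filter.mpr ⟨hX0Nf, hle⟩⟩
    exact Nat.le_of_dvd hpos hdd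
  -- double counting
  have hswap : ∑ φ ∈ Φ, (Nf.filter (fun Y => Y ≤ LinearMap.ker φ)).card
      = ∑ Y ∈ Nf, (Φ.filter (fun φ => Y ≤ LinearMap.ker φ)).card := by
    simp_rw [Finset.card_filter]
    exact Finset.sum_comm
  -- inner counts
  have hinner : ∀ Y : Submodule F (Fin v → F),
      (Φ.filter (fun φ => Y ≤ LinearMap.ker φ)).card
        = q ^ (v - finrank F ↥(X0 ⊔ Y)) - 1 := by
    intro Y
    rw [← hfilter_card (X0 ⊔ Y), hΦdef, Finset.filter_filter]
    congr 1
    ext φ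
    simp [sup_le_iff, and_assoc]
  -- lower bound on the big sum
  have hΦcard : Φ.card = q ^ (v - t) - 1 := by
    rw [hΦdef, hfilter_card X0, ht0]
  have hlow : (q ^ (v - t) - 1) * q ^ r
      ≤ ∑ φ ∈ Φ, (Nf.filter (fun Y => Y ≤ LinearMap.ker φ)).card := by
    calc (q ^ (v - t) - 1) * q ^ r = Φ.card • (q ^ r) := by rw [hΦcard, smul_eq_mul]
    _ ≤ _ := Finset.card_nsmul_le_sum Φ _ _ hm
  -- upper bound on the big sum
  have hupper : ∑ Y ∈ Nf, (Φ.filter (fun φ => Y ≤ LinearMap.ker φ)).card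
      ≤ (q ^ (v - t) - 1) + (Nf.card - 1) * (q ^ (v - t - 1) - 1) := by
    rw [Finset.sum_eq_sum_sdiff_singleton_add hX0Nf]
    have hX0term : (Φ.filter (fun φ => X0 ≤ LinearMap.ker φ)).card = q ^ (v - t) - 1 := by
      rw [hinner X0]
      have : X0 ⊔ X0 = X0 := sup_idem X0
      rw [this, ht0]
    rw [hX0term]
    rw [add_comm]
    apply Nat.add_le_add_left
    have hbound : ∀ Y ∈ Nf \ {X0}, (Φ.filter (fun φ => Y ≤ LinearMap.ker φ)).card
        ≤ q ^ (v - t - 1) - 1 := by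
      intro Y hY
      rw [Finset.mem_sdiff, Finset.mem_singleton] at hY
      obtain ⟨hYNf, hYne⟩ := hY
      rw [hinner Y]
      have hd : t + 1 ≤ finrank F ↥(X0 ⊔ Y) := by
        have h1 : t ≤ finrank F ↥(X0 ⊔ Y) := by
          rw [← ht0]
          exact Submodule.finrank_mono le_sup_left
        rcases Nat.eq_or_lt_of_le h1 with heq | hlt
        · exfalso
          have hX0eq : X0 = X0 ⊔ Y :=
            Submodule.eq_of_le_of_finrank_eq le_sup_left (by rw [ht0, ← heq])
          have hYeq : Y = X0 ⊔ Y :=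
            Submodule.eq_of_le_of_finrank_eq le_sup_right
              (by rw [hNt Y ((hmemNf Y).mp hYNf), ← heq])
          exact hYne (hYeq.trans hX0eq.symm)
        · omega
      have : v - finrank F ↥(X0 ⊔ Y) ≤ v - t - 1 := by omega
      have := Nat.pow_le_pow_right (show 1 ≤ q by omega) this
      omega
    calc ∑ Y ∈ Nf \ {X0}, (Φ.filter (fun φ => Y ≤ LinearMap.ker φ)).card
        ≤ (Nf \ {X0}).card • (q ^ (v - t - 1) - 1) :=
          Finset.sum_le_card_nsmul _ _ _ hbound
    _ = (Nf.card - 1) * (q ^ (v - t - 1) - 1) := by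
          rw [smul_eq_mul, Finset.card_sdiff_of_subset (by simpa using hX0Nf), Finset.card_singleton]
  -- put together
  have hineq : (q ^ (v - t) - 1) * q ^ r
      ≤ (q ^ (v - t) - 1) + (Nf.card - 1) * (q ^ (v - t - 1) - 1) :=
    le_trans hlow (le_trans (le_of_eq hswap) hupper)
  rw [hn]
  have he : 1 ≤ v - t := by omega
  rw [hn] at hdvd
  exact arith_final hq2 hr he hnpos hineq hdvd
end
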